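/- arXiv:1709.10422 — 6 statements merged into one kernel-verified Lean document; each statement's English description precedes it below -/
import Mathlib

section
/- Let G be a powerful finite p-group that can be generated by 2 elements. Then every subgroup of G is powerful. -/
/-- The subgroup generated by `n`-th powers of elements of `H`. -/
def subPow {G : Type*} [Group G] (H : Subgroup G) (n : ℕ) : Subgroup G :=
  Subgroup.closure ((· ^ n) '' (H : Set G))

/-- A subgroup `H` of a (finite) `p`-group is powerful if `H' ≤ H^p` for `p` odd,
or `H' ≤ H^4` for `p = 2`. -/
def IsPowerfulSubgroup (p : ℕ) {G : Type*} [Group G] (H : Subgroup G) : Prop :=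
  if p = 2 then ⁅H, H⁆ ≤ subPow H 4 else ⁅H, H⁆ ≤ subPow H p

namespace PowerfulAux

open Subgroup
open scoped Pointwise
open scoped commutatorElement


open Subgroup

/-- the relevant exponent: `4` if `p = 2`, else `p`. -/
def qq (p : ℕ) : ℕ := if p = 2 then 4 else p

theorem isPowerfulSubgroup_iff {p : ℕ} {G : Type*} [Group G] (H : Subgroup G) :
    IsPowerfulSubgroup p H ↔ ⁅H, H⁆ ≤ subPow H (qq p) := by
  unfold IsPowerfulSubgroup qq
  split_ifs <;> rfl

variable {G : Type*} [Group G]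

theorem pow_mem_subPow {H : Subgroup G} {x : G} (hx : x ∈ H) (n : ℕ) :
    x ^ n ∈ subPow H n :=
  Subgroup.subset_closure ⟨x, hx, rfl⟩

theorem subPow_le {H : Subgroup G} {n : ℕ} {K : Subgroup G}
    (h : ∀ x ∈ H, x ^ n ∈ K) : subPow H n ≤ K := by
  apply Subgroup.closure_le _ |>.2
  rintro - ⟨x, hx, rfl⟩
  exact h x hx

theorem subPow_le_self (H : Subgroup G) (n : ℕ) : subPow H n ≤ H :=
  subPow_le fun x hx => H.pow_mem hx n

theorem subPow_mono {H K : Subgroup G} (h : H ≤ K) (n : ℕ) :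
    subPow H n ≤ subPow K n :=
  subPow_le fun x hx => pow_mem_subPow (h hx) n

theorem subPow_four_le_two (H : Subgroup G) : subPow H 4 ≤ subPow H 2 :=
  subPow_le fun x hx => by
    have : x ^ 4 = (x ^ 2) ^ 2 := by rw [← pow_mul]
    rw [this]
    exact pow_mem_subPow (H.pow_mem hx 2) 2

theorem subPow_qq_le {p : ℕ} (hp : p.Prime) (H : Subgroup G) :
    subPow H (qq p) ≤ subPow H p := by
  unfold qq
  split_ifs with h
  · subst h; exact subPow_four_le_two H
  · exact le_rfl

theorem map_subPow {G' : Type*} [Group G'] (f : G →* G') (H : Subgroup G) (n : ℕ) :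
    Subgroup.map f (subPow H n) = subPow (Subgroup.map f H) n := by
  unfold subPow
  rw [MonoidHom.map_closure]
  congr 1
  ext y
  constructor
  · rintro ⟨-, ⟨x, hx, rfl⟩, rfl⟩
    exact ⟨f x, ⟨x, hx, rfl⟩, (map_pow f x n).symm⟩
  · rintro ⟨-, ⟨x, hx, rfl⟩, rfl⟩
    exact ⟨x ^ n, ⟨x, hx, rfl⟩, map_pow f x n⟩

theorem subPow_normal {H : Subgroup G} (hH : H.Normal) (n : ℕ) :
    (subPow H n).Normal := by
  constructor
  intro x hx g
  have : g * x * g⁻¹ = (MulAut.conj g).toMonoidHom x := rfl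
  rw [this]
  have hmem : (MulAut.conj g).toMonoidHom x ∈ Subgroup.map (MulAut.conj g).toMonoidHom (subPow H n) :=
    Subgroup.mem_map_of_mem _ hx
  rw [map_subPow] at hmem
  have hfix : Subgroup.map (MulAut.conj g).toMonoidHom H = H := by
    ext y
    constructor
    · rintro ⟨z, hz, rfl⟩
      exact hH.conj_mem z hz g
    · intro hy
      exact ⟨g⁻¹ * y * g, by simpa using hH.conj_mem y hy g⁻¹, by simp [MulAut.conj]; group⟩
  rwa [hfix] at hmem

theorem subPow_top_normal (n : ℕ) : (subPow (⊤ : Subgroup G) n).Normal :=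
  subPow_normal (inferInstance) n

theorem map_subtype_subPow (W : Subgroup G) (H : Subgroup W) (n : ℕ) :
    Subgroup.map W.subtype (subPow H n) = subPow (Subgroup.map W.subtype H) n :=
  map_subPow W.subtype H n

theorem map_subtype_subPow_top (W : Subgroup G) (n : ℕ) :
    Subgroup.map W.subtype (subPow ⊤ n) = subPow W n := by
  rw [map_subPow]
  congr 1
  rw [← MonoidHom.range_eq_map]
  exact W.range_subtype


variable {G : Type*} [Group G]

theorem comm_mul_left (a b c : G) : ⁅a * b, c⁆ = a * ⁅b, c⁆ * a⁻¹ * ⁅a, c⁆ := by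
  simp only [commutatorElement_def]; group

theorem comm_mul_right (a b c : G) : ⁅a, b * c⁆ = ⁅a, b⁆ * (b * ⁅a, c⁆ * b⁻¹) := by
  simp only [commutatorElement_def]; group

/-- collection lemma for `⁅x^n, u⁆` when `e := ⁅x,⁅x,u⁆⁆` is central. -/
theorem comm_pow_left (x u : G) (he : ∀ g : G, Commute ⁅x, ⁅x, u⁆⁆ g) :
    ∀ n : ℕ, ⁅x ^ n, u⁆ = ⁅x, ⁅x, u⁆⁆ ^ n.choose 2 * ⁅x, u⁆ ^ n := by
  intro n
  set c := ⁅x, u⁆ with hc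
  set e := ⁅x, c⁆ with hee
  have hxc : x * c * x⁻¹ = e * c := by rw [hee, commutatorElement_def]; group
  have hec : Commute e c := he c
  have hxe : x * e * x⁻¹ = e := by
    have h := (he x⁻¹).eq
    calc x * e * x⁻¹ = x * (e * x⁻¹) := by group
    _ = x * (x⁻¹ * e) := by rw [h]
    _ = e := by group
  induction n with
  | zero => simp
  | succ n ih =>
    have hchoose : (n + 1).choose 2 = n.choose 2 + n := by
      rw [Nat.choose_succ_succ n 1, Nat.choose_one_right, Nat.add_comm]
    calc ⁅x ^ (n+1), u⁆ = x * ⁅x ^ n, u⁆ * x⁻¹ * ⁅x, u⁆ := by rw [pow_succ', comm_mul_left]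
    _ = x * (e ^ n.choose 2 * c ^ n) * x⁻¹ * c := by rw [ih]
    _ = (x * e ^ n.choose 2 * x⁻¹) * (x * c ^ n * x⁻¹) * c := by group
    _ = e ^ n.choose 2 * (e * c) ^ n * c := by rw [← conj_pow, ← conj_pow, hxe, hxc]
    _ = e ^ n.choose 2 * (e ^ n * c ^ n) * c := by rw [hec.mul_pow]
    _ = (e ^ n.choose 2 * e ^ n) * (c ^ n * c) := by group
    _ = e ^ (n.choose 2 + n) * c ^ (n + 1) := by rw [← pow_add, ← pow_succ]
    _ = e ^ (n+1).choose 2 * c ^ (n+1) := by rw [hchoose]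

/-- collection: `(a*b)^n = ⁅b,a⁆^(n choose 2) * a^n * b^n` when `⁅b,a⁆` is central. -/
theorem mul_pow_of_central_comm (a b : G) (hc : ∀ g : G, Commute ⁅b, a⁆ g) :
    ∀ n : ℕ, (a * b) ^ n = ⁅b, a⁆ ^ n.choose 2 * a ^ n * b ^ n := by
  set c := ⁅b, a⁆ with hcc
  have hba : b * a = c * (a * b) := by rw [hcc, commutatorElement_def]; group
  have hpow : ∀ n : ℕ, b ^ n * a = c ^ n * (a * b ^ n) := by
    intro n
    induction n with
    | zero => simp
    | succ n ih =>
      calc b ^ (n+1) * a = b * (b ^ n * a) := by rw [pow_succ']; group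
      _ = b * (c ^ n * (a * b ^ n)) := by rw [ih]
      _ = (b * c ^ n) * (a * b ^ n) := by group
      _ = (c ^ n * b) * (a * b ^ n) := by rw [((hc b).pow_left n).eq]
      _ = c ^ n * ((b * a) * b ^ n) := by group
      _ = c ^ n * ((c * (a * b)) * b ^ n) := by rw [hba]
      _ = (c ^ n * c) * (a * (b * b ^ n)) := by group
      _ = c ^ (n+1) * (a * b ^ (n+1)) := by rw [pow_succ, pow_succ']
  intro n
  induction n with
  | zero => simp
  | succ n ih =>
    have hchoose : (n + 1).choose 2 = n.choose 2 + n := by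
      rw [Nat.choose_succ_succ n 1, Nat.choose_one_right, Nat.add_comm]
    calc (a * b) ^ (n+1) = (a * b) ^ n * (a * b) := by rw [pow_succ]
    _ = c ^ n.choose 2 * a ^ n * (b ^ n * a) * b := by rw [ih]; group
    _ = c ^ n.choose 2 * a ^ n * (c ^ n * (a * b ^ n)) * b := by rw [hpow]
    _ = c ^ n.choose 2 * (a ^ n * c ^ n) * (a * (b ^ n * b)) := by group
    _ = c ^ n.choose 2 * (c ^ n * a ^ n) * (a * (b ^ n * b)) := by
          rw [((hc (a ^ n)).pow_left n).eq]
    _ = (c ^ n.choose 2 * c ^ n) * ((a ^ n * a) * (b ^ n * b)) := by group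
    _ = c ^ (n.choose 2 + n) * (a ^ (n+1) * b ^ (n+1)) := by
          rw [← pow_add, ← pow_succ, ← pow_succ]
    _ = c ^ (n+1).choose 2 * a ^ (n+1) * b ^ (n+1) := by rw [hchoose]; group







variable {p : ℕ} [Fact p.Prime] {G : Type*} [Group G]

theorem exists_pow_prime_order (hG : IsPGroup p G) {g : G} (hg : g ≠ 1) :
    ∃ w : G, w ∈ Subgroup.zpowers g ∧ w ≠ 1 ∧ w ^ p = 1 := by
  obtain ⟨k, hk⟩ := hG g
  induction k generalizing g with
  | zero => simp at hk; exact absurd hk hg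
  | succ k ih =>
    by_cases hy : g ^ p ^ k = 1
    · exact ih hg hy
    · refine ⟨g ^ p ^ k, ⟨((p ^ k : ℕ) : ℤ), show g ^ ((p ^ k : ℕ) : ℤ) = g ^ p ^ k by rw [zpow_natCast]⟩, hy, ?_⟩
      rw [← pow_mul, ← pow_succ]
      exact hk

theorem exists_central_prime_order [Finite G] [Nontrivial G] (hG : IsPGroup p G) :
    ∃ z : G, z ∈ Subgroup.center G ∧ z ≠ 1 ∧ z ^ p = 1 := by
  have : Nontrivial (Subgroup.center G) := hG.center_nontrivial
  obtain ⟨z, hz⟩ := exists_ne (1 : Subgroup.center G)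
  have hz1 : (z : G) ≠ 1 := by
    intro h
    exact hz (Subtype.ext (by rw [h]; rfl))
  obtain ⟨w, hwmem, hw1, hwp⟩ := exists_pow_prime_order hG hz1
  refine ⟨w, ?_, hw1, hwp⟩
  obtain ⟨m, rfl⟩ := hwmem
  exact Subgroup.zpow_mem _ z.2 m

theorem central_zpowers_normal {z : G} (hz : z ∈ Subgroup.center G) :
    (Subgroup.zpowers z).Normal := by
  constructor
  intro n hn g
  obtain ⟨m, rfl⟩ := hn
  have hc : z ^ m ∈ Subgroup.center G := Subgroup.zpow_mem _ hz m
  have hcomm : g * z ^ m = z ^ m * g := Subgroup.mem_center_iff.1 hc g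
  have : g * z ^ m * g⁻¹ = z ^ m := by rw [hcomm]; group
  rw [this]
  exact ⟨m, rfl⟩

theorem card_quotient_lt [Finite G] (N : Subgroup G) [N.Normal] (hN : N ≠ ⊥) :
    Nat.card (G ⧸ N) < Nat.card G := by
  have h1 : Nat.card N * N.index = Nat.card G := Subgroup.card_mul_index N
  have h2 : N.index = Nat.card (G ⧸ N) := Subgroup.index_eq_card N
  have h3 : N.index ≠ 0 := Subgroup.index_ne_zero_of_finite
  have h4 : 1 < Nat.card N := by
    have : Nontrivial N := (Subgroup.nontrivial_iff_ne_bot N).2 hN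
    exact Finite.one_lt_card
  have h5 : 2 * N.index ≤ Nat.card N * N.index := Nat.mul_le_mul_right _ h4
  omega

theorem eq_one_of_subPow_eq_top :
    ∀ (n : ℕ) {G : Type*} [Group G] [Finite G], Nat.card G ≤ n → IsPGroup p G →
      subPow (⊤ : Subgroup G) p = ⊤ → ∀ g : G, g = 1 := by
  intro n
  induction n with
  | zero =>
    intro G _ _ hcard _ _ _
    have := Nat.card_pos (α := G)
    omega
  | succ n ih =>
    intro G _ _ hcard hG htop g
    by_contra hg
    have : Nontrivial G := ⟨⟨g, 1, hg⟩⟩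
    by_cases hZ : Subgroup.center G = ⊤
    · have hcomm : ∀ u v : G, Commute u v := fun u v =>
        Subgroup.mem_center_iff.1 (hZ ▸ Subgroup.mem_top v) u
      have hsurj : Function.Surjective (fun y : G => y ^ p) := by
        intro x
        have hx : x ∈ subPow (⊤ : Subgroup G) p := by rw [htop]; exact Subgroup.mem_top x
        induction hx using Subgroup.closure_induction with
        | mem y hy => obtain ⟨w, -, rfl⟩ := hy; exact ⟨w, rfl⟩
        | one => exact ⟨1, one_pow p⟩
        | mul u v hu hv ihu ihv =>
          obtain ⟨y1, h1⟩ := ihu; obtain ⟨y2, h2⟩ := ihv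
          have h1' : y1 ^ p = u := h1
          have h2' : y2 ^ p = v := h2
          exact ⟨y1 * y2, show (y1 * y2) ^ p = u * v by
            rw [(hcomm y1 y2).mul_pow, h1', h2']⟩
        | inv u hu ihu =>
          obtain ⟨y1, h1⟩ := ihu
          have h1' : y1 ^ p = u := h1
          exact ⟨y1⁻¹, show (y1⁻¹) ^ p = u⁻¹ by rw [inv_pow, h1']⟩
      have hinj : Function.Injective (fun y : G => y ^ p) :=
        Finite.injective_iff_surjective.2 hsurj
      obtain ⟨w, -, hw1, hwp⟩ := exists_pow_prime_order hG hg
      exact hw1 (hinj (show w ^ p = (1 : G) ^ p by rw [hwp, one_pow]))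
    · have : Nontrivial (Subgroup.center G) := hG.center_nontrivial
      have hZbot : Subgroup.center G ≠ ⊥ := by
        intro h
        rw [h] at this
        obtain ⟨z, hz⟩ := exists_ne (1 : (⊥ : Subgroup G))
        have h1 : (z : G) = 1 := Subgroup.mem_bot.1 z.2
        exact hz (Subtype.ext (by rw [h1]; rfl))
      have hlt : Nat.card (G ⧸ Subgroup.center G) < Nat.card G :=
        card_quotient_lt _ hZbot
      have hle : Nat.card (G ⧸ Subgroup.center G) ≤ n := by omega
      set π := QuotientGroup.mk' (Subgroup.center G) with hπ
      have hQtop : subPow (⊤ : Subgroup (G ⧸ Subgroup.center G)) p = ⊤ := by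
        have h5 := congrArg (Subgroup.map π) htop
        rwa [map_subPow, Subgroup.map_top_of_surjective π (QuotientGroup.mk'_surjective _)] at h5
      have hall := ih hle (hG.to_quotient _) hQtop
      apply hZ
      rw [eq_top_iff]
      intro x _
      have hx1 : π x = 1 := hall (π x)
      rw [← QuotientGroup.ker_mk' (Subgroup.center G), MonoidHom.mem_ker]
      exact hx1





variable {p : ℕ} [Fact p.Prime] {G : Type*} [Group G]





/-- Frattini-style: if `K ⊔ G^p = G` in a finite `p`-group then `K = G`. -/
theorem eq_top_of_sup_subPow_eq_top :
    ∀ (n : ℕ) {G : Type*} [Group G] [Finite G], Nat.card G ≤ n → IsPGroup p G →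
      ∀ K : Subgroup G, K ⊔ subPow (⊤ : Subgroup G) p = ⊤ → K = ⊤ := by
  intro n
  induction n with
  | zero =>
    intro G _ _ hcard _ _ _
    have := Nat.card_pos (α := G)
    omega
  | succ n ih =>
    intro G _ _ hcard hG K hsup
    by_cases htriv : ∀ g : G, g = 1
    · rw [eq_top_iff]; intro x _; rw [htriv x]; exact K.one_mem
    · push_neg at htriv
      obtain ⟨g, hg⟩ := htriv
      have : Nontrivial G := ⟨⟨g, 1, hg⟩⟩
      obtain ⟨z, hzc, hz1, hzp⟩ := exists_central_prime_order hG
      set N := Subgroup.zpowers z with hN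
      have : N.Normal := central_zpowers_normal hzc
      have hNbot : N ≠ ⊥ := by
        intro h
        exact hz1 (Subgroup.mem_bot.1 (h ▸ Subgroup.mem_zpowers z))
      set π := QuotientGroup.mk' N with hπ
      have hlt : Nat.card (G ⧸ N) < Nat.card G := card_quotient_lt N hNbot
      have hmap : Subgroup.map π K ⊔ subPow (⊤ : Subgroup (G ⧸ N)) p = ⊤ := by
        have h5 := congrArg (Subgroup.map π) hsup
        rwa [Subgroup.map_sup, map_subPow,
          Subgroup.map_top_of_surjective π (QuotientGroup.mk'_surjective _)] at h5
      have hKtop : Subgroup.map π K = ⊤ :=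
        ih (by omega) (hG.to_quotient _) _ hmap
      have hKN : K ⊔ N = ⊤ := by
        have := congrArg (Subgroup.comap π) hKtop
        rwa [Subgroup.comap_map_eq, QuotientGroup.ker_mk', Subgroup.comap_top] at this
      -- K is normal since G = K * N with N central
      have hdecomp : ∀ g : G, ∃ k ∈ K, ∃ ν ∈ N, g = k * ν := by
        intro g
        have hg' : g ∈ ((K ⊔ N : Subgroup G) : Set G) := by
          rw [hKN]; trivial
        rw [Subgroup.mul_normal K N] at hg'
        obtain ⟨k, hk, ν, hν, hkν⟩ := hg'
        exact ⟨k, hk, ν, hν, hkν.symm⟩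
      have hKnormal : K.Normal := by
        constructor
        intro k hk g
        obtain ⟨k', hk', ν, hν, hgd⟩ := hdecomp g
        rw [hgd]
        obtain ⟨m, rfl⟩ := hν
        have hcen : z ^ m ∈ Subgroup.center G := Subgroup.zpow_mem _ hzc m
        have h1 : k' * z ^ m * k * (k' * z ^ m)⁻¹ = k' * k * k'⁻¹ := by
          have := Subgroup.mem_center_iff.1 hcen k
          calc k' * z ^ m * k * (k' * z ^ m)⁻¹ = k' * (z ^ m * k * (z ^ m)⁻¹) * k'⁻¹ := by group
          _ = k' * (k * z ^ m * (z ^ m)⁻¹) * k'⁻¹ := by rw [← this]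
          _ = k' * k * k'⁻¹ := by group
        rw [h1]
        exact K.mul_mem (K.mul_mem hk' hk) (K.inv_mem hk')
      -- quotient by K is generated by p-th powers
      set π' := QuotientGroup.mk' K with hπ'
      have hQ' : subPow (⊤ : Subgroup (G ⧸ K)) p = ⊤ := by
        have h5 := congrArg (Subgroup.map π') hsup
        rw [Subgroup.map_sup, map_subPow,
          Subgroup.map_top_of_surjective π' (QuotientGroup.mk'_surjective _)] at h5
        have hK0 : Subgroup.map π' K = ⊥ := by
          rw [eq_bot_iff]
          rintro - ⟨x, hx, rfl⟩
          have : π' x = 1 := (QuotientGroup.eq_one_iff x).2 hx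
          rw [this]; exact Subgroup.one_mem ⊥
        rwa [hK0, bot_sup_eq] at h5
      have hallone := eq_one_of_subPow_eq_top (Nat.card (G ⧸ K)) (le_refl _)
        (hG.to_quotient _) hQ'
      rw [eq_top_iff]
      intro x _
      exact (QuotientGroup.eq_one_iff x).1 (hallone (π' x))







variable {p : ℕ} [Fact p.Prime]

/-- the key Lubotzky–Mann style lemma: in a powerful `p`-group,
`[G^p, G] ≤ (G^p)^q`. -/
theorem commutator_subPow_le :
    ∀ (n : ℕ) {G : Type*} [Group G] [Finite G], Nat.card G ≤ n → IsPGroup p G →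
      ⁅(⊤ : Subgroup G), ⊤⁆ ≤ subPow (⊤ : Subgroup G) (qq p) →
      ⁅subPow (⊤ : Subgroup G) p, ⊤⁆ ≤ subPow (subPow (⊤ : Subgroup G) p) (qq p) := by
  intro n
  induction n with
  | zero =>
    intro G _ _ hcard _ _
    have := Nat.card_pos (α := G)
    omega
  | succ n ih =>
    intro G _ _ hcard hG hpow
    set V : Subgroup G := subPow ⊤ p with hV
    set X : Subgroup G := subPow V (qq p) with hX
    have hVnormal : V.Normal := subPow_top_normal p
    have hXnormal : X.Normal := subPow_normal hVnormal (qq p)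
    by_cases hXbot : X = ⊥
    · -- X = ⊥ : show V is central
      by_cases htriv : ∀ g : G, g = 1
      · rw [Subgroup.commutator_le]
        intro v _ g _
        have : ⁅v, g⁆ = 1 := htriv _
        rw [this]; exact X.one_mem
      · push_neg at htriv
        obtain ⟨g0, hg0⟩ := htriv
        have : Nontrivial G := ⟨⟨g0, 1, hg0⟩⟩
        obtain ⟨z, hzc, hz1, hzp⟩ := exists_central_prime_order hG
        set N := Subgroup.zpowers z with hN
        have hNnorm : N.Normal := central_zpowers_normal hzc
        have hNbot : N ≠ ⊥ := fun h => hz1 (Subgroup.mem_bot.1 (h ▸ Subgroup.mem_zpowers z))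
        have hNcent : ∀ w ∈ N, w ∈ Subgroup.center G ∧ w ^ p = 1 := by
          rintro w ⟨m, rfl⟩
          constructor
          · exact Subgroup.zpow_mem _ hzc m
          · have : (z ^ m) ^ (p : ℕ) = (z ^ (p : ℕ)) ^ m := by
              rw [← zpow_natCast (z ^ m) p, ← zpow_mul, mul_comm m (p : ℤ), zpow_mul, zpow_natCast z p]
            rw [this, hzp, one_zpow]
        -- from the induction hypothesis applied to G/N : [V, G] ≤ N
        set π := QuotientGroup.mk' N with hπ
        have hlt : Nat.card (G ⧸ N) < Nat.card G := card_quotient_lt N hNbot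
        have hQpow : ⁅(⊤ : Subgroup (G ⧸ N)), ⊤⁆ ≤ subPow (⊤ : Subgroup (G ⧸ N)) (qq p) := by
          have h5 : Subgroup.map π ⁅(⊤ : Subgroup G), ⊤⁆ ≤ Subgroup.map π (subPow (⊤ : Subgroup G) (qq p)) :=
            Subgroup.map_mono hpow
          rwa [Subgroup.map_commutator, map_subPow,
            Subgroup.map_top_of_surjective π (QuotientGroup.mk'_surjective _)] at h5
        have hVN : ⁅V, (⊤ : Subgroup G)⁆ ≤ N := by
          have h6 := ih (by omega) (hG.to_quotient N) hQpow
          have h7 : subPow (⊤ : Subgroup (G ⧸ N)) p = Subgroup.map π V := by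
            rw [map_subPow, Subgroup.map_top_of_surjective π (QuotientGroup.mk'_surjective _)]
          rw [h7] at h6
          have h8 : subPow (Subgroup.map π V) (qq p) = ⊥ := by
            rw [← map_subPow, ← hX, hXbot, Subgroup.map_bot]
          rw [h8] at h6
          have h9 : Subgroup.map π ⁅V, (⊤ : Subgroup G)⁆ ≤ ⊥ := by
            rw [Subgroup.map_commutator]
            refine le_trans (Subgroup.commutator_mono le_rfl ?_) h6
            exact le_top
          rw [Subgroup.map_le_iff_le_comap] at h9
          refine le_trans h9 ?_
          intro x hx
          have : π x = 1 := Subgroup.mem_bot.1 hx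
          rwa [← QuotientGroup.ker_mk' N, MonoidHom.mem_ker]
        -- now show every p-th power is central
        have hVq : ∀ v ∈ V, v ^ (qq p) = 1 := by
          intro v hv
          have := pow_mem_subPow hv (qq p)
          rw [← hX, hXbot] at this
          exact Subgroup.mem_bot.1 this
        have hcent : ∀ x : G, x ^ p ∈ Subgroup.center G := by
          by_cases hp2 : p = 2
          · -- p = 2
            subst hp2
            have hq4 : qq 2 = 4 := rfl
            -- step 1 : squares of elements of V are central
            have hs1 : ∀ v ∈ V, v ^ 2 ∈ Subgroup.center G := by
              intro v hv
              rw [Subgroup.mem_center_iff]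
              intro u
              have hc : ⁅v, u⁆ ∈ N := hVN (commutator_mem_commutator hv (Subgroup.mem_top u))
              obtain ⟨hccent, hc2⟩ := hNcent _ hc
              have h1 : ⁅v ^ 2, u⁆ = 1 := by
                have hvv : v ^ 2 = v * v := sq v
                rw [hvv, comm_mul_left]
                have : v * ⁅v, u⁆ * v⁻¹ = ⁅v, u⁆ := by
                  have := Subgroup.mem_center_iff.1 hccent v
                  rw [this]; group
                rw [this, ← sq, hc2]
              have := commutatorElement_eq_one_iff_commute.1 h1
              exact this.symm.eq
            have hV2cent : subPow V 2 ≤ Subgroup.center G := by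
              apply subPow_le
              intro v hv
              exact hs1 v hv
            have hV2sq : ∀ w ∈ subPow V 2, w ^ 2 = 1 := by
              intro w hw
              induction hw using Subgroup.closure_induction with
              | mem y hy =>
                obtain ⟨v, hv, rfl⟩ := hy
                rw [← pow_mul]
                exact hVq v hv
              | one => rw [one_pow]
              | mul u w hu hw ihu ihw =>
                have hcom : Commute u w := by
                  have := Subgroup.mem_center_iff.1 (hV2cent hu) w
                  exact this.symm
                rw [hcom.mul_pow, ihu, ihw, one_mul]
              | inv u hu ihu => rw [inv_pow, ihu, inv_one]
            have hcomm2 : ⁅(⊤ : Subgroup G), ⊤⁆ ≤ subPow V 2 := by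
              refine le_trans hpow ?_
              apply subPow_le
              intro x _
              have hx2 : x ^ 2 ∈ V := pow_mem_subPow (Subgroup.mem_top x) 2
              have : x ^ (qq 2) = (x ^ 2) ^ 2 := by rw [← pow_mul]; rfl
              rw [this]
              exact pow_mem_subPow hx2 2
            intro x
            rw [Subgroup.mem_center_iff]
            intro u
            have hc : ⁅x, u⁆ ∈ subPow V 2 :=
              hcomm2 (commutator_mem_commutator (Subgroup.mem_top x) (Subgroup.mem_top u))
            have h1 : ⁅x ^ 2, u⁆ = 1 := by
              have hvv : x ^ 2 = x * x := sq x
              rw [hvv, comm_mul_left]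
              have h2 : x * ⁅x, u⁆ * x⁻¹ = ⁅x, u⁆ := by
                have := Subgroup.mem_center_iff.1 (hV2cent hc) x
                rw [this]; group
              rw [h2, ← sq]
              exact hV2sq _ hc
            exact (commutatorElement_eq_one_iff_commute.1 h1).symm.eq
          · -- p odd
            have hqp : qq p = p := by unfold qq; rw [if_neg hp2]
            have hodd : Odd p := (Fact.out : p.Prime).odd_of_ne_two hp2
            intro x
            rw [Subgroup.mem_center_iff]
            intro u
            have hcV : ⁅x, u⁆ ∈ V := by
              have := hpow (commutator_mem_commutator (Subgroup.mem_top x) (Subgroup.mem_top u))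
              rwa [hqp] at this
            have heN : ⁅x, ⁅x, u⁆⁆ ∈ N := by
              apply hVN
              rw [Subgroup.commutator_comm]
              exact commutator_mem_commutator (Subgroup.mem_top x) hcV
            obtain ⟨hecent, hep⟩ := hNcent _ heN
            have hecomm : ∀ g : G, Commute ⁅x, ⁅x, u⁆⁆ g := by
              intro g
              exact (Subgroup.mem_center_iff.1 hecent g).symm
            have h1 : ⁅x ^ p, u⁆ = ⁅x, ⁅x, u⁆⁆ ^ p.choose 2 * ⁅x, u⁆ ^ p :=
              comm_pow_left x u hecomm p
            have hcp : ⁅x, u⁆ ^ p = 1 := by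
              have := hVq _ hcV
              rwa [hqp] at this
            have hep2 : ⁅x, ⁅x, u⁆⁆ ^ p.choose 2 = 1 := by
              obtain ⟨k, hk⟩ := hodd
              have hch : p.choose 2 = p * k := by
                rw [Nat.choose_two_right]
                have : p - 1 = 2 * k := by omega
                rw [this]
                rw [Nat.mul_div_assoc p (by omega : 2 ∣ 2 * k)]
                congr 1
                omega
              rw [hch, pow_mul, hep, one_pow]
            have : ⁅x ^ p, u⁆ = 1 := by rw [h1, hcp, hep2, one_mul]
            exact (commutatorElement_eq_one_iff_commute.1 this).symm.eq
        -- conclude : V ≤ center, so [V, G] = ⊥ ≤ X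
        have hVcent : V ≤ Subgroup.center G := by
          apply subPow_le
          intro x _
          exact hcent x
        rw [Subgroup.commutator_le]
        intro v hv g _
        have : Commute v g := (Subgroup.mem_center_iff.1 (hVcent hv) g).symm
        rw [commutatorElement_eq_one_iff_commute.2 this]
        exact X.one_mem
    · -- X ≠ ⊥ : quotient by X
      set π := QuotientGroup.mk' X with hπ
      have hlt : Nat.card (G ⧸ X) < Nat.card G := card_quotient_lt X hXbot
      have hQpow : ⁅(⊤ : Subgroup (G ⧸ X)), ⊤⁆ ≤ subPow (⊤ : Subgroup (G ⧸ X)) (qq p) := by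
        have h5 : Subgroup.map π ⁅(⊤ : Subgroup G), ⊤⁆ ≤ Subgroup.map π (subPow (⊤ : Subgroup G) (qq p)) :=
          Subgroup.map_mono hpow
        rwa [Subgroup.map_commutator, map_subPow,
          Subgroup.map_top_of_surjective π (QuotientGroup.mk'_surjective _)] at h5
      have h6 := ih (by omega) (hG.to_quotient X) hQpow
      have h7 : subPow (⊤ : Subgroup (G ⧸ X)) p = Subgroup.map π V := by
        rw [map_subPow, Subgroup.map_top_of_surjective π (QuotientGroup.mk'_surjective _)]
      rw [h7] at h6
      have h8 : subPow (Subgroup.map π V) (qq p) = ⊥ := by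
        rw [← map_subPow, ← hX]
        rw [eq_bot_iff]
        rintro - ⟨x, hx, rfl⟩
        exact Subgroup.mem_bot.2 ((QuotientGroup.eq_one_iff x).2 hx)
      rw [h8] at h6
      have h9 : Subgroup.map π ⁅V, (⊤ : Subgroup G)⁆ ≤ ⊥ := by
        rw [Subgroup.map_commutator]
        exact le_trans (Subgroup.commutator_mono le_rfl le_top) h6
      rw [Subgroup.map_le_iff_le_comap] at h9
      refine le_trans h9 ?_
      intro x hx
      have : π x = 1 := Subgroup.mem_bot.1 hx
      have hxX : x ∈ X := by
        rwa [← QuotientGroup.ker_mk' X, MonoidHom.mem_ker]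
      exact hxX







variable {p : ℕ} [Fact p.Prime] {G : Type*} [Group G]

/-- in a powerful `p`-group generated by `a`, `b`, the subgroup `G^p` is
generated by `a^p` and `b^p`. -/
theorem subPow_top_eq_closure_pows [Finite G] (hG : IsPGroup p G)
    (hpow : ⁅(⊤ : Subgroup G), ⊤⁆ ≤ subPow (⊤ : Subgroup G) (qq p)) {a b : G}
    (hab : (⊤ : Subgroup G) = Subgroup.closure {a, b}) :
    subPow (⊤ : Subgroup G) p = Subgroup.closure {a ^ p, b ^ p} := by
  have hprime : p.Prime := Fact.out
  set V : Subgroup G := subPow ⊤ p with hV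
  set U : Subgroup G := Subgroup.closure {a ^ p, b ^ p} with hU
  have hVnormal : V.Normal := subPow_top_normal p
  have hUV : U ≤ V := by
    rw [hU, Subgroup.closure_le]
    rintro x (rfl | rfl)
    · exact pow_mem_subPow (Subgroup.mem_top a) p
    · exact pow_mem_subPow (Subgroup.mem_top b) p
  have hM2 : ⁅V, (⊤ : Subgroup G)⁆ ≤ subPow V (qq p) :=
    commutator_subPow_le (Nat.card G) le_rfl hG hpow
  have hpow' : ⁅(⊤ : Subgroup G), ⊤⁆ ≤ V := le_trans hpow (subPow_qq_le hprime ⊤)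
  set D : Subgroup G := subPow V p ⊔ ⁅V, (⊤ : Subgroup G)⁆ with hD
  have hD1 : (subPow V p).Normal := subPow_normal hVnormal p
  have hD2 : (⁅V, (⊤ : Subgroup G)⁆).Normal := Subgroup.commutator_normal V ⊤
  have hDnormal : D.Normal := Subgroup.sup_normal _ _
  have hDle : D ≤ subPow V p :=
    sup_le le_rfl (le_trans hM2 (subPow_qq_le hprime V))
  set π := QuotientGroup.mk' D with hπ
  have hker : ∀ x : G, π x = 1 ↔ x ∈ D := by
    intro x
    exact QuotientGroup.eq_one_iff x
  -- elements of the image of V are central of order dividing p in G/D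
  have hcent : ∀ v ∈ V, (∀ g : G ⧸ D, Commute (π v) g) ∧ (π v) ^ p = 1 := by
    intro v hv
    constructor
    · intro g
      obtain ⟨u, rfl⟩ := QuotientGroup.mk'_surjective D g
      have : ⁅v, u⁆ ∈ D := le_sup_right (α := Subgroup G)
        (commutator_mem_commutator hv (Subgroup.mem_top u))
      have h1 : ⁅π v, π u⁆ = 1 := by
        rw [← map_commutatorElement]
        exact (hker _).2 this
      exact commutatorElement_eq_one_iff_commute.1 h1
    · rw [← map_pow]
      exact (hker _).2 (le_sup_left (α := Subgroup G) (pow_mem_subPow hv p))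
  -- every commutator in G/D comes from V
  have hcommV : ∀ u w : G ⧸ D, ∃ v ∈ V, π v = ⁅u, w⁆ := by
    intro u w
    obtain ⟨x, rfl⟩ := QuotientGroup.mk'_surjective D u
    obtain ⟨y, rfl⟩ := QuotientGroup.mk'_surjective D w
    refine ⟨⁅x, y⁆, hpow' (commutator_mem_commutator (Subgroup.mem_top x) (Subgroup.mem_top y)),
      map_commutatorElement π x y⟩
  -- the p-th power map is a homomorphism on G/D
  have hkey : ∀ u w : G ⧸ D, (u * w) ^ p = u ^ p * w ^ p := by
    intro u w
    obtain ⟨v, hvV, hvc⟩ := hcommV w u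
    have hvcent := hcent v hvV
    have hc : ∀ g : G ⧸ D, Commute ⁅w, u⁆ g := by
      intro g; rw [← hvc]; exact hvcent.1 g
    have h1 := mul_pow_of_central_comm u w hc p
    have h2 : ⁅w, u⁆ ^ p.choose 2 = 1 := by
      by_cases hp2 : p = 2
      · subst hp2
        -- for p = 2 commutators die in G/D since [G,G] ≤ G^4 ≤ (V)^2 ≤ D
        have hc1 : ⁅w, u⁆ = 1 := by
          obtain ⟨x, rfl⟩ := QuotientGroup.mk'_surjective D w
          obtain ⟨y, rfl⟩ := QuotientGroup.mk'_surjective D u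
          rw [← map_commutatorElement]
          apply (hker _).2
          have h3 : ⁅x, y⁆ ∈ subPow (⊤ : Subgroup G) (qq 2) :=
            hpow (commutator_mem_commutator (Subgroup.mem_top x) (Subgroup.mem_top y))
          have h4 : subPow (⊤ : Subgroup G) (qq 2) ≤ subPow V 2 := by
            apply subPow_le
            intro g _
            have hg2 : g ^ 2 ∈ V := pow_mem_subPow (Subgroup.mem_top g) 2
            have : g ^ (qq 2) = (g ^ 2) ^ 2 := by rw [← pow_mul]; rfl
            rw [this]
            exact pow_mem_subPow hg2 2
          exact le_sup_left (α := Subgroup G) (h4 h3)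
        rw [hc1, one_pow]
      · have hodd : Odd p := hprime.odd_of_ne_two hp2
        obtain ⟨k, hk⟩ := hodd
        have hch : p.choose 2 = p * k := by
          rw [Nat.choose_two_right]
          have h5 : p - 1 = 2 * k := by omega
          rw [h5, Nat.mul_div_assoc p (by omega : 2 ∣ 2 * k)]
          congr 1
          omega
        have hcp : ⁅w, u⁆ ^ p = 1 := by rw [← hvc, hvcent.2]
        rw [hch, pow_mul, hcp, one_pow]
    rw [h1, h2, one_mul]
  set φ : (G ⧸ D) →* (G ⧸ D) :=
    { toFun := fun g => g ^ p
      map_one' := one_pow p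
      map_mul' := hkey } with hφ
  -- images of p-th powers of generators
  have himg : ∀ x : G, x ^ p ∈ U ⊔ D := by
    intro x
    have hx : x ∈ Subgroup.closure {a, b} := by rw [← hab]; exact Subgroup.mem_top x
    have h1 : π x ∈ Subgroup.closure {π a, π b} := by
      rw [← Set.image_pair, ← MonoidHom.map_closure]
      exact Subgroup.mem_map_of_mem π hx
    have h2 : φ (π x) ∈ Subgroup.closure {φ (π a), φ (π b)} := by
      rw [← Set.image_pair, ← MonoidHom.map_closure]
      exact Subgroup.mem_map_of_mem φ h1
    have h3 : φ (π x) = π (x ^ p) := (map_pow π x p).symm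
    have h4 : φ (π a) = π (a ^ p) := (map_pow π a p).symm
    have h5 : φ (π b) = π (b ^ p) := (map_pow π b p).symm
    rw [h3, h4, h5] at h2
    have h6 : π (x ^ p) ∈ Subgroup.map π U := by
      rw [hU, MonoidHom.map_closure, Set.image_pair]
      exact h2
    obtain ⟨u0, hu0, hu0x⟩ := h6
    have h7 : x ^ p * u0⁻¹ ∈ D := by
      apply (hker _).1
      rw [map_mul, map_inv, hu0x]
      group
    have h8 : x ^ p = (x ^ p * u0⁻¹) * u0 := by group
    rw [h8]
    exact Subgroup.mul_mem _ (le_sup_right (α := Subgroup G) h7)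
      (le_sup_left (α := Subgroup G) hu0)
  -- hence V = U ⊔ V^p
  have heq : U ⊔ subPow V p = V := by
    apply le_antisymm
    · exact sup_le hUV (subPow_le_self V p)
    · refine le_trans (subPow_le (fun x _ => himg x)) ?_
      exact sup_le le_sup_left (le_trans hDle le_sup_right)
  -- transfer to the group V and apply the Frattini-type lemma
  have hsub : (U.subgroupOf V) ⊔ subPow (⊤ : Subgroup V) p = ⊤ := by
    apply Subgroup.map_injective (Subgroup.subtype_injective V)
    rw [Subgroup.map_sup, Subgroup.subgroupOf_map_subtype, map_subPow,
      ← MonoidHom.range_eq_map, Subgroup.range_subtype, inf_eq_left.2 hUV, heq]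
  have htop : U.subgroupOf V = ⊤ :=
    eq_top_of_sup_subPow_eq_top (Nat.card V) le_rfl (hG.to_subgroup V) _ hsub
  have : U ⊓ V = V := by
    have := congrArg (Subgroup.map V.subtype) htop
    rwa [Subgroup.subgroupOf_map_subtype, ← MonoidHom.range_eq_map,
      Subgroup.range_subtype] at this
  exact le_antisymm (by rw [← this]; exact inf_le_left) hUV

variable {p : ℕ} [Fact p.Prime] {Q : Type*} [Group Q]

/-- dichotomy for pairs in an elementary abelian `p`-group generated by 2 elements. -/
theorem pair_dichotomy (hcomm : ∀ u v : Q, Commute u v) (hexp : ∀ u : Q, u ^ p = 1)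
    {a b : Q} (hab : (⊤ : Subgroup Q) = Subgroup.closure {a, b}) (x y : Q) :
    Subgroup.closure {x, y} = ⊤ ∨ y ∈ Subgroup.zpowers x ∨ x ∈ Subgroup.zpowers y := by
  have hprime : p.Prime := Fact.out
  have hzp : ∀ u : Q, u ^ (p : ℤ) = 1 := fun u => by
    rw [zpow_natCast]; exact hexp u
  have hzmod : ∀ (u : Q) (i k : ℤ), (p : ℤ) ∣ (k - i) → u ^ i = u ^ k := by
    rintro u i k ⟨c, hc⟩
    have hk : k = i + p * c := by linarith
    rw [hk, zpow_add, zpow_mul, hzp, one_zpow, mul_one]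
  have hbez : ∀ {z : ℤ}, ¬ (p : ℤ) ∣ z → ∃ z' m : ℤ, z * z' + p * m = 1 := by
    intro z hz
    have h1 : ¬ p ∣ z.natAbs := fun h => hz (Int.natCast_dvd.2 h)
    have h2 : Nat.Coprime p z.natAbs := (hprime.coprime_iff_not_dvd).2 h1
    have h3 : Int.gcd z p = 1 := by
      have h5 : Int.gcd z p = Nat.gcd z.natAbs p := rfl
      rw [h5, Nat.gcd_comm]
      exact h2
    have h4 := Int.gcd_eq_gcd_ab z (p : ℤ)
    rw [h3] at h4
    exact ⟨z.gcdA p, z.gcdB p, by push_cast at h4; linarith⟩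
  have hcollect : ∀ s t s' t' : ℤ,
      (a ^ s * b ^ t) * (a ^ s' * b ^ t') = a ^ (s + s') * b ^ (t + t') := by
    intro s t s' t'
    have h1 : b ^ t * a ^ s' = a ^ s' * b ^ t := (hcomm _ _).eq
    calc a ^ s * b ^ t * (a ^ s' * b ^ t') = a ^ s * (b ^ t * a ^ s') * b ^ t' := by group
    _ = a ^ s * (a ^ s' * b ^ t) * b ^ t' := by rw [h1]
    _ = (a ^ s * a ^ s') * (b ^ t * b ^ t') := by group
    _ = a ^ (s + s') * b ^ (t + t') := by rw [← zpow_add, ← zpow_add]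
  have hprod : ∀ (s t m : ℤ), (a ^ s * b ^ t) ^ m = a ^ (s * m) * b ^ (t * m) := by
    intro s t m
    rw [(hcomm (a ^ s) (b ^ t)).mul_zpow, ← zpow_mul, ← zpow_mul]
  have hnf : ∀ u : Q, ∃ i j : ℤ, u = a ^ i * b ^ j := by
    intro u
    have hu : u ∈ Subgroup.closure {a, b} := by rw [← hab]; exact Subgroup.mem_top u
    induction hu using Subgroup.closure_induction with
    | mem w hw =>
      rcases hw with rfl | rfl
      · exact ⟨1, 0, by simp⟩
      · exact ⟨0, 1, by simp⟩
    | one => exact ⟨0, 0, by simp⟩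
    | mul w w' hw hw' ihw ihw' =>
      obtain ⟨i, j, rfl⟩ := ihw
      obtain ⟨k, l, rfl⟩ := ihw'
      exact ⟨i + k, j + l, (hcollect i j k l)⟩
    | inv w hw ihw =>
      obtain ⟨i, j, rfl⟩ := ihw
      refine ⟨-i, -j, ?_⟩
      have h1 : b ^ (-j) * a ^ (-i) = a ^ (-i) * b ^ (-j) := (hcomm _ _).eq
      rw [mul_inv_rev, ← zpow_neg, ← zpow_neg, h1]
  obtain ⟨i, j, hx⟩ := hnf x
  obtain ⟨k, l, hy⟩ := hnf y
  by_cases hpD : (p : ℤ) ∣ (i * l - j * k)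
  · obtain ⟨c, hc⟩ := hpD
    by_cases hpi : (p : ℤ) ∣ i
    · by_cases hpj : (p : ℤ) ∣ j
      · -- x = 1
        right; right
        have ha0 : a ^ i = 1 := by
          rw [hzmod a i 0 (by rw [zero_sub]; exact (dvd_neg).2 hpi), zpow_zero]
        have hb0 : b ^ j = 1 := by
          rw [hzmod b j 0 (by rw [zero_sub]; exact (dvd_neg).2 hpj), zpow_zero]
        have hx1 : x = 1 := by rw [hx, ha0, hb0, one_mul]
        rw [hx1]
        exact Subgroup.one_mem _
      · -- p ∤ j : use t = l * j'
        right; left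
        obtain ⟨j', m', hj⟩ := hbez hpj
        refine Subgroup.mem_zpowers_iff.2 ⟨l * j', ?_⟩
        rw [hx, hprod]
        have hd1 : (p : ℤ) ∣ (k - i * (l * j')) :=
          ⟨k * m' - c * j', by linear_combination (-j') * hc - k * hj⟩
        have hd2 : (p : ℤ) ∣ (l - j * (l * j')) :=
          ⟨l * m', by linear_combination (-l) * hj⟩
        rw [hzmod a _ k hd1, hzmod b _ l hd2, hy]
    · -- p ∤ i : use t = k * i'
      right; left
      obtain ⟨i', m', hi⟩ := hbez hpi
      refine Subgroup.mem_zpowers_iff.2 ⟨k * i', ?_⟩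
      rw [hx, hprod]
      have hd1 : (p : ℤ) ∣ (k - i * (k * i')) :=
        ⟨k * m', by linear_combination (-k) * hi⟩
      have hd2 : (p : ℤ) ∣ (l - j * (k * i')) :=
        ⟨l * m' + c * i', by linear_combination i' * hc + (-l) * hi⟩
      rw [hzmod a _ k hd1, hzmod b _ l hd2, hy]
  · -- the pair generates
    left
    set S := Subgroup.closure ({x, y} : Set Q) with hS
    have hxS : x ∈ S := Subgroup.subset_closure (Set.mem_insert x {y})
    have hyS : y ∈ S := Subgroup.subset_closure (Set.mem_insert_of_mem x rfl)
    set D := i * l - j * k with hD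
    have haD : a ^ D ∈ S := by
      have e1 : x ^ (l : ℤ) * y ^ (-j) = a ^ D := by
        rw [hx, hy, hprod, hprod, hcollect]
        have e2 : i * l + k * (-j) = D := by rw [hD]; ring
        have e3 : j * l + l * (-j) = 0 := by ring
        rw [e2, e3, zpow_zero, mul_one]
      rw [← e1]
      exact Subgroup.mul_mem _ (Subgroup.zpow_mem _ hxS _) (Subgroup.zpow_mem _ hyS _)
    have hbD : b ^ D ∈ S := by
      have e1 : y ^ (i : ℤ) * x ^ (-k) = b ^ D := by
        rw [hx, hy, hprod, hprod, hcollect]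
        have e2 : k * i + i * (-k) = 0 := by ring
        have e3 : l * i + j * (-k) = D := by rw [hD]; ring
        rw [e2, e3, zpow_zero, one_mul]
      rw [← e1]
      exact Subgroup.mul_mem _ (Subgroup.zpow_mem _ hyS _) (Subgroup.zpow_mem _ hxS _)
    obtain ⟨u, v, huv⟩ := hbez hpD
    have hgen : ∀ w : Q, w ^ D ∈ S → w ∈ S := by
      intro w hw
      have e1 : w = (w ^ D) ^ u * (w ^ (p : ℤ)) ^ v := by
        rw [← zpow_mul, ← zpow_mul, ← zpow_add]
        have : D * u + (p : ℤ) * v = 1 := huv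
        rw [this, zpow_one]
      rw [e1, hzp, one_zpow, mul_one]
      exact Subgroup.zpow_mem _ hw _
    rw [eq_top_iff, hab]
    apply (Subgroup.closure_le _).2
    rintro w (rfl | rfl)
    · exact hgen _ haD
    · exact hgen _ hbD

open scoped Pointwise






variable {p : ℕ} [Fact p.Prime]

section transfer
variable {G : Type*} [Group G]

theorem map_subtype_top (W : Subgroup G) : Subgroup.map W.subtype ⊤ = W := by
  rw [← MonoidHom.range_eq_map, Subgroup.range_subtype]

theorem intrinsic_pow (W : Subgroup G) {m : ℕ} (h : ⁅W, W⁆ ≤ subPow W m) :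
    ⁅(⊤ : Subgroup W), ⊤⁆ ≤ subPow (⊤ : Subgroup W) m := by
  rw [← Subgroup.map_le_map_iff_of_injective (Subgroup.subtype_injective W),
    Subgroup.map_commutator, map_subPow, map_subtype_top]
  exact h

theorem extrinsic_pow {W K : Subgroup G} {m : ℕ} (hKW : K ≤ W)
    (h : ⁅K.subgroupOf W, K.subgroupOf W⁆ ≤ subPow (K.subgroupOf W) m) :
    ⁅K, K⁆ ≤ subPow K m := by
  have h2 := Subgroup.map_mono (f := W.subtype) h
  rwa [Subgroup.map_commutator, map_subPow, Subgroup.subgroupOf_map_subtype,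
    inf_eq_left.2 hKW] at h2

theorem intrinsic_gen (W : Subgroup G) {g1 g2 : G} (h : W = Subgroup.closure {g1, g2}) :
    ∃ a' b' : W, (⊤ : Subgroup W) = Subgroup.closure {a', b'} := by
  have hg1 : g1 ∈ W := h ▸ Subgroup.subset_closure (Set.mem_insert g1 {g2})
  have hg2 : g2 ∈ W := h ▸ Subgroup.subset_closure (Set.mem_insert_of_mem g1 rfl)
  refine ⟨⟨g1, hg1⟩, ⟨g2, hg2⟩, ?_⟩
  apply Subgroup.map_injective (Subgroup.subtype_injective W)
  rw [MonoidHom.map_closure, Set.image_pair, map_subtype_top]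
  exact h

theorem card_lt_of_ne_top [Finite G] {W : Subgroup G} (h : W ≠ ⊤) :
    Nat.card W < Nat.card G := by
  have h1 : Nat.card W * W.index = Nat.card G := Subgroup.card_mul_index W
  have h2 : W.index ≠ 1 := fun hc => h (Subgroup.index_eq_one.1 hc)
  have h3 : W.index ≠ 0 := Subgroup.index_ne_zero_of_finite
  have h4 : 0 < Nat.card W := Nat.card_pos
  have h5 : Nat.card W * 2 ≤ Nat.card W * W.index :=
    Nat.mul_le_mul_left _ (by omega)
  omega
end transfer

theorem main_aux :
    ∀ (n : ℕ) {G : Type*} [Group G] [Finite G], Nat.card G ≤ n → IsPGroup p G →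
      ⁅(⊤ : Subgroup G), ⊤⁆ ≤ subPow (⊤ : Subgroup G) (qq p) →
      (∃ a b : G, (⊤ : Subgroup G) = Subgroup.closure {a, b}) →
      ∀ H : Subgroup G, ⁅H, H⁆ ≤ subPow H (qq p) := by
  have hprime : p.Prime := Fact.out
  intro n
  induction n with
  | zero =>
    intro G _ _ hcard _ _ _ _
    have := Nat.card_pos (α := G)
    omega
  | succ n ih =>
    intro G _ _ hcard hG hpow hgen H
    obtain ⟨a, b, hab⟩ := hgen
    set V : Subgroup G := subPow ⊤ p with hV
    have hVnormal : V.Normal := subPow_top_normal p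
    -- degenerate case : G = G^p forces G = 1
    by_cases hVtop : V = ⊤
    · have htriv := eq_one_of_subPow_eq_top (Nat.card G) le_rfl hG hVtop
      rw [Subgroup.commutator_le]
      intro g1 _ g2 _
      have hone : ⁅g1, g2⁆ = 1 := by
        rw [htriv g1, htriv g2]; simp [commutatorElement_def]
      rw [hone]; exact Subgroup.one_mem _
    · rw [Subgroup.commutator_le]
      intro x hx y hy
      set K : Subgroup G := Subgroup.closure {x, y} with hK
      have hxK : x ∈ K := Subgroup.subset_closure (Set.mem_insert x {y})
      have hyK : y ∈ K := Subgroup.subset_closure (Set.mem_insert_of_mem x rfl)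
      have hKH : K ≤ H := by
        rw [hK, Subgroup.closure_le]
        rintro w (rfl | rfl)
        · exact hx
        · exact hy
      suffices hKK : ⁅K, K⁆ ≤ subPow K (qq p) by
        exact subPow_mono hKH (qq p) (hKK (commutator_mem_commutator hxK hyK))
      -- the quotient G/V is elementary abelian generated by two elements
      set π := QuotientGroup.mk' V with hπ
      have hpow' : ⁅(⊤ : Subgroup G), ⊤⁆ ≤ V := le_trans hpow (subPow_qq_le hprime ⊤)
      have hQcomm : ∀ u w : G ⧸ V, Commute u w := by
        intro u w
        obtain ⟨x0, rfl⟩ := QuotientGroup.mk'_surjective V u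
        obtain ⟨y0, rfl⟩ := QuotientGroup.mk'_surjective V w
        apply commutatorElement_eq_one_iff_commute.1
        rw [← map_commutatorElement]
        exact (QuotientGroup.eq_one_iff _).2
          (hpow' (commutator_mem_commutator (Subgroup.mem_top x0) (Subgroup.mem_top y0)))
      have hQexp : ∀ u : G ⧸ V, u ^ p = 1 := by
        intro u
        obtain ⟨x0, rfl⟩ := QuotientGroup.mk'_surjective V u
        rw [← map_pow]
        exact (QuotientGroup.eq_one_iff _).2 (pow_mem_subPow (Subgroup.mem_top x0) p)
      have hQgen : (⊤ : Subgroup (G ⧸ V)) = Subgroup.closure {π a, π b} := by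
        rw [← Set.image_pair, ← MonoidHom.map_closure, ← hab,
          Subgroup.map_top_of_surjective _ (QuotientGroup.mk'_surjective V)]
      -- case 2/3 : one projected generator is a power of the other
      have hM2 : ⁅V, (⊤ : Subgroup G)⁆ ≤ subPow V (qq p) :=
        commutator_subPow_le (Nat.card G) le_rfl hG hpow
      have hMcase : ∀ u w : G, π w ∈ Subgroup.zpowers (π u) →
          ⁅Subgroup.closure ({u, w} : Set G), Subgroup.closure ({u, w} : Set G)⁆ ≤
            subPow (Subgroup.closure ({u, w} : Set G)) (qq p) := by
        intro u w hzw
        set M : Subgroup G := Subgroup.zpowers u ⊔ V with hM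
        have huM : u ∈ M := le_sup_left (α := Subgroup G) (Subgroup.mem_zpowers u)
        have hwM : w ∈ M := by
          have h1 : (π w) ∈ Subgroup.map π (Subgroup.zpowers u) := by
            rwa [MonoidHom.map_zpowers]
          have h2 : w ∈ Subgroup.comap π (Subgroup.map π (Subgroup.zpowers u)) :=
            Subgroup.mem_comap.2 h1
          rwa [Subgroup.comap_map_eq, QuotientGroup.ker_mk'] at h2
        have hKM : Subgroup.closure ({u, w} : Set G) ≤ M := by
          rw [Subgroup.closure_le]
          rintro g (rfl | rfl)
          · exact huM
          · exact hwM
        by_cases hMtop : M = ⊤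
        · -- G is cyclic, hence abelian
          have hcyc : Subgroup.zpowers u = ⊤ :=
            eq_top_of_sup_subPow_eq_top (Nat.card G) le_rfl hG _ hMtop
          have hcom : ∀ g1 g2 : G, Commute g1 g2 := by
            intro g1 g2
            have h1 : g1 ∈ Subgroup.zpowers u := by rw [hcyc]; trivial
            have h2 : g2 ∈ Subgroup.zpowers u := by rw [hcyc]; trivial
            obtain ⟨s, rfl⟩ := h1
            obtain ⟨t, rfl⟩ := h2
            exact (Commute.refl u).zpow_zpow s t
          rw [Subgroup.commutator_le]
          intro g1 _ g2 _
          rw [commutatorElement_eq_one_iff_commute.2 (hcom g1 g2)]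
          exact Subgroup.one_mem _
        · -- M is a proper powerful 2-generated subgroup containing u and w
          -- first, the subcase u ∈ V
          by_cases huV : u ∈ V
          · have hwV : w ∈ V := by
              have h1 : π u = 1 := (QuotientGroup.eq_one_iff u).2 huV
              rw [h1] at hzw
              obtain ⟨t, ht⟩ := Subgroup.mem_zpowers_iff.1 hzw
              rw [one_zpow] at ht
              exact (QuotientGroup.eq_one_iff w).1 ht.symm
            have hKV : Subgroup.closure ({u, w} : Set G) ≤ V := by
              rw [Subgroup.closure_le]
              rintro g (rfl | rfl)
              · exact huV
              · exact hwV
            have hVpow : ⁅V, V⁆ ≤ subPow V (qq p) :=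
              le_trans (Subgroup.commutator_mono le_rfl le_top) hM2
            have hVgen : ∃ g1 g2 : G, V = Subgroup.closure {g1, g2} :=
              ⟨a ^ p, b ^ p, subPow_top_eq_closure_pows hG hpow hab⟩
            obtain ⟨g1, g2, hVg⟩ := hVgen
            have hVcard : Nat.card V ≤ n := by
              have := card_lt_of_ne_top hVtop
              omega
            have hres := ih hVcard (hG.to_subgroup V) (intrinsic_pow V hVpow)
              (intrinsic_gen V hVg) ((Subgroup.closure ({u, w} : Set G)).subgroupOf V)
            exact extrinsic_pow hKV hres
          · -- u ∉ V : extend u to a generating pair of G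
            have hπu : π u ≠ 1 := fun h => huV ((QuotientGroup.eq_one_iff u).1 h)
            have hz : ∃ z : G, (⊤ : Subgroup G) = Subgroup.closure {u, z} := by
              -- find z among a, b with π z ∉ zpowers (π u)
              have hnb : ∃ z : G, ¬ (π z ∈ Subgroup.zpowers (π u)) := by
                by_contra hcon
                push_neg at hcon
                apply hMtop
                have h1 : (⊤ : Subgroup (G ⧸ V)) ≤ Subgroup.zpowers (π u) := by
                  rw [hQgen, Subgroup.closure_le]
                  rintro g (rfl | rfl)
                  · exact hcon a
                  · exact hcon b
                have h2 : Subgroup.zpowers (π u) = ⊤ := le_antisymm le_top h1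
                have h3 := congrArg (Subgroup.comap π) h2
                rwa [← MonoidHom.map_zpowers, Subgroup.comap_map_eq, QuotientGroup.ker_mk',
                  Subgroup.comap_top] at h3
              obtain ⟨z, hzz⟩ := hnb
              refine ⟨z, ?_⟩
              rcases pair_dichotomy hQcomm hQexp hQgen (π u) (π z) with h1 | h1 | h1
              · -- closure {π u, π z} = ⊤ : pull back
                have h2 : Subgroup.closure ({u, z} : Set G) ⊔ V = ⊤ := by
                  have h3 : Subgroup.map π (Subgroup.closure ({u, z} : Set G)) = ⊤ := by
                    rw [MonoidHom.map_closure, Set.image_pair]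
                    exact h1
                  have h4 := congrArg (Subgroup.comap π) h3
                  rwa [Subgroup.comap_map_eq, QuotientGroup.ker_mk',
                    Subgroup.comap_top] at h4
                exact (eq_top_of_sup_subPow_eq_top (Nat.card G) le_rfl hG _ h2).symm
              · exact absurd h1 hzz
              · -- π u ∈ zpowers (π z) : then π z ∈ zpowers (π u), contradiction
                exfalso
                apply hzz
                obtain ⟨t, ht⟩ := Subgroup.mem_zpowers_iff.1 h1
                have hzp1 : (π z) ^ (p : ℤ) = 1 := by
                  rw [zpow_natCast]; exact hQexp (π z)
                have hpt : ¬ (p : ℤ) ∣ t := by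
                  rintro ⟨c, rfl⟩
                  apply hπu
                  rw [← ht, zpow_mul, hzp1, one_zpow]
                -- Bezout
                have h5 : ¬ p ∣ t.natAbs := fun h => hpt (Int.natCast_dvd.2 h)
                have h6 : Nat.Coprime p t.natAbs := (hprime.coprime_iff_not_dvd).2 h5
                have h7 : Int.gcd t p = 1 := by
                  have h8 : Int.gcd t p = Nat.gcd t.natAbs p := rfl
                  rw [h8, Nat.gcd_comm]
                  exact h6
                have h9 := Int.gcd_eq_gcd_ab t (p : ℤ)
                rw [h7] at h9
                push_cast at h9
                refine Subgroup.mem_zpowers_iff.2 ⟨t.gcdA p, ?_⟩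
                have h12 : t * t.gcdA p = 1 - (p : ℤ) * t.gcdB p := by linarith
                rw [← ht, ← zpow_mul, h12, zpow_sub, zpow_one, zpow_mul, hzp1,
                  one_zpow]
                group
            obtain ⟨z, hz⟩ := hz
            have hVuz : V = Subgroup.closure {u ^ p, z ^ p} :=
              subPow_top_eq_closure_pows hG hpow hz
            have hMgen : M = Subgroup.closure {u, z ^ p} := by
              apply le_antisymm
              · apply sup_le
                · intro g hg
                  obtain ⟨s, rfl⟩ := hg
                  exact Subgroup.zpow_mem _
                    (Subgroup.subset_closure (Set.mem_insert u {z ^ p})) s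
                · rw [hVuz, Subgroup.closure_le]
                  rintro g (rfl | rfl)
                  · exact Subgroup.pow_mem _
                      (Subgroup.subset_closure (Set.mem_insert u {z ^ p})) p
                  · exact Subgroup.subset_closure (Set.mem_insert_of_mem u rfl)
              · rw [Subgroup.closure_le]
                rintro g (rfl | rfl)
                · exact huM
                · exact le_sup_right (α := Subgroup G)
                    (pow_mem_subPow (Subgroup.mem_top z) p)
            -- M is powerful
            have hXnormal : (subPow V (qq p)).Normal := subPow_normal hVnormal (qq p)
            have hM2' : ⁅(⊤ : Subgroup G), V⁆ ≤ subPow V (qq p) := by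
              rw [Subgroup.commutator_comm]
              exact hM2
            have hMpow : ⁅M, M⁆ ≤ subPow M (qq p) := by
              have hVM : subPow V (qq p) ≤ subPow M (qq p) :=
                subPow_mono (le_sup_right (α := Subgroup G)) (qq p)
              rw [Subgroup.commutator_le]
              intro m1 hm1 m2 hm2
              apply hVM
              have hd1 : m1 ∈ ((Subgroup.zpowers u : Subgroup G) : Set G) * (V : Set G) := by
                rw [← Subgroup.mul_normal]; exact hm1
              have hd2 : m2 ∈ ((Subgroup.zpowers u : Subgroup G) : Set G) * (V : Set G) := by
                rw [← Subgroup.mul_normal]; exact hm2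
              obtain ⟨w1, hw1, v1, hv1, hm1e⟩ := hd1
              obtain ⟨w2, hw2, v2, hv2, hm2e⟩ := hd2
              obtain ⟨s, rfl⟩ := hw1
              obtain ⟨t, rfl⟩ := hw2
              rw [← hm1e, ← hm2e]
              have c1 : ⁅v1, u ^ t * v2⁆ ∈ subPow V (qq p) :=
                hM2 (commutator_mem_commutator hv1 (Subgroup.mem_top _))
              have c2 : ⁅u ^ s, v2⁆ ∈ subPow V (qq p) :=
                hM2' (commutator_mem_commutator (Subgroup.mem_top _) hv2)
              have c3 : ⁅u ^ s, u ^ t⁆ = 1 :=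
                commutatorElement_eq_one_iff_commute.2 ((Commute.refl u).zpow_zpow s t)
              rw [comm_mul_left]
              apply Subgroup.mul_mem
              · exact hXnormal.conj_mem _ c1 (u ^ s)
              · rw [comm_mul_right, c3, one_mul]
                exact hXnormal.conj_mem _ c2 (u ^ t)
            have hMcard : Nat.card M ≤ n := by
              have := card_lt_of_ne_top hMtop
              omega
            exact extrinsic_pow hKM (ih hMcard (hG.to_subgroup M) (intrinsic_pow M hMpow)
              (intrinsic_gen M hMgen) _)
      rcases pair_dichotomy hQcomm hQexp hQgen (π x) (π y) with h1 | h1 | h1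
      · -- x, y generate G
        have h2 : K ⊔ V = ⊤ := by
          have h3 : Subgroup.map π K = ⊤ := by
            rw [hK, MonoidHom.map_closure, Set.image_pair]
            exact h1
          have h4 := congrArg (Subgroup.comap π) h3
          rwa [Subgroup.comap_map_eq, QuotientGroup.ker_mk', Subgroup.comap_top] at h4
        have hKtop : K = ⊤ :=
          eq_top_of_sup_subPow_eq_top (Nat.card G) le_rfl hG _ h2
        rw [hKtop]
        exact hpow
      · exact hMcase x y h1
      · have h2 := hMcase y x h1
        rw [show ({y, x} : Set G) = {x, y} from Set.pair_comm y x] at h2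
        exact h2

end PowerfulAux

/-- Every subgroup of a `2`-generated powerful finite `p`-group is powerful. -/
theorem subgroup_powerful_of_two_generated_powerful
    {p : ℕ} [Fact p.Prime] {G : Type*} [Group G] [Finite G]
    (hG : IsPGroup p G) (hGpow : IsPowerfulSubgroup p (⊤ : Subgroup G))
    (hgen : ∃ a b : G, (⊤ : Subgroup G) = Subgroup.closure {a, b})
    (H : Subgroup G) :
    IsPowerfulSubgroup p H := by
  rw [PowerfulAux.isPowerfulSubgroup_iff] at hGpow ⊢
  exact PowerfulAux.main_aux (Nat.card G) le_rfl hG hGpow hgen H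
end

section
/- Let G be a group, N ≤ L ≤ G with N normal in G, and x ∈ G. If (1) every element of L/N is of the form [xN, gN] for some g ∈ G, and (2) every element of N is of the form [x,h] for some h ∈ G, then every element of L is of the form [x,g] for some g ∈ G. -/
open scoped commutatorElement

/-- Lifting a commutator covering from a quotient: if `N ≤ L ≤ G` with `N ⊴ G`,
every element of `L/N` is a commutator of `xN` in `G/N`, and every element of
`N` is a commutator of `x` in `G`, then every element of `L` is a commutator
of `x` in `G`. -/
theorem commutator_cover_of_quotient_cover
    {G : Type*} [Group G] (N L : Subgroup G) [N.Normal] (hNL : N ≤ L) (x : G)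
    (h1 : ∀ y ∈ L, ∃ g : G, (y : G ⧸ N) = ⁅(x : G ⧸ N), (g : G ⧸ N)⁆)
    (h2 : ∀ n ∈ N, ∃ h : G, n = ⁅x, h⁆) :
    ∀ y ∈ L, ∃ g : G, y = ⁅x, g⁆ := by
  intro y hy
  obtain ⟨g, hg⟩ := h1 y hy
  have hn : (⁅x, g⁆)⁻¹ * y ∈ N := by
    rw [← QuotientGroup.eq_one_iff, QuotientGroup.mk_mul, QuotientGroup.mk_inv,
      show ((⁅x, g⁆ : G) : G ⧸ N) = ⁅(x : G ⧸ N), (g : G ⧸ N)⁆ by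
        simp [commutatorElement_def], ← hg]
    group
  have hn' : g⁻¹ * ((⁅x, g⁆)⁻¹ * y) * g ∈ N := by
    simpa using Subgroup.Normal.conj_mem ‹N.Normal› _ hn g⁻¹
  obtain ⟨h, hh⟩ := h2 _ hn'
  refine ⟨g * h, ?_⟩
  have : g⁻¹ * ((⁅x, g⁆)⁻¹ * y) * g = ⁅x, h⁆ := hh
  simp only [commutatorElement_def] at this ⊢
  have := congrArg (fun z => ⁅x,g⁆ * (g * z * g⁻¹)) this
  simp only [commutatorElement_def] at this
  rw [show y = ⁅x,g⁆ * (g * (g⁻¹ * ((⁅x, g⁆)⁻¹ * y) * g) * g⁻¹) by group]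
  rw [hh]
  simp only [commutatorElement_def]
  group
end

section
/- Let G be a group, N ≤ L ≤ G with N normal in G, x ∈ G, and S ⊆ G with [L,S] ⊆ N. If L/N is generated by the cosets [x,s]N for s ∈ S, then every element of L/N equals [xN, yN] for some y in the subgroup ⟨S⟩N/N; in particular L/N ⊆ K_{xN}(G/N). -/
open scoped commutatorElement

/-- If `N ≤ L ≤ G` with `N ⊴ G`, `S ⊆ G` with `[L,S] ⊆ N`, and `L/N` is
generated by the cosets `[x,s]N` for `s ∈ S`, then every element of `L/N` is a
commutator of `xN` with an element of `⟨S⟩N/N`; in particular with an element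
of `G/N`. -/
theorem quotient_cover_of_central_generation
    {G : Type*} [Group G] (N L : Subgroup G) [N.Normal] (hNL : N ≤ L) (x : G)
    (S : Set G) (hLS : ∀ l ∈ L, ∀ s ∈ S, ⁅l, s⁆ ∈ N)
    (hgen : L.map (QuotientGroup.mk' N) =
      Subgroup.closure {c : G ⧸ N | ∃ s ∈ S, c = ⁅(x : G ⧸ N), (s : G ⧸ N)⁆}) :
    (∀ y ∈ L, ∃ z : G, z ∈ Subgroup.closure S ⊔ N ∧
        (y : G ⧸ N) = ⁅(x : G ⧸ N), (z : G ⧸ N)⁆) ∧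
    (∀ y ∈ L, ∃ g : G, (y : G ⧸ N) = ⁅(x : G ⧸ N), (g : G ⧸ N)⁆) := by
  have hcomm : ∀ z ∈ Subgroup.closure (⇑(QuotientGroup.mk' N) '' S),
      ∀ l ∈ L.map (QuotientGroup.mk' N), Commute z l := by
    intro z hz
    induction hz using Subgroup.closure_induction with
    | mem c hc =>
      rintro l hl
      obtain ⟨s, hs, rfl⟩ := hc
      obtain ⟨l₀, hl₀, rfl⟩ := hl
      have h1 : QuotientGroup.mk' N ⁅l₀, s⁆ = 1 := (QuotientGroup.eq_one_iff _).2 (hLS l₀ hl₀ s hs)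
      rw [map_commutatorElement] at h1
      exact (commutatorElement_eq_one_iff_commute.mp h1).symm
    | one => intro l hl; exact Commute.one_left l
    | mul a b _ _ iha ihb => intro l hl; exact (iha l hl).mul_left (ihb l hl)
    | inv a _ iha => intro l hl; exact (iha l hl).inv_left
  have key : ∀ l ∈ L.map (QuotientGroup.mk' N),
      ∃ z ∈ Subgroup.closure (⇑(QuotientGroup.mk' N) '' S),
        l = ⁅(x : G ⧸ N), z⁆ := by
    intro l hl
    rw [hgen] at hl
    induction hl using Subgroup.closure_induction with
    | mem c hc =>
      obtain ⟨s, hs, rfl⟩ := hc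
      exact ⟨s, Subgroup.subset_closure ⟨s, hs, rfl⟩, rfl⟩
    | one => exact ⟨1, one_mem _, by simp⟩
    | mul a b ha hb iha ihb =>
      obtain ⟨za, hza, rfl⟩ := iha
      obtain ⟨zb, hzb, rfl⟩ := ihb
      refine ⟨za * zb, mul_mem hza hzb, ?_⟩
      have hbL : ⁅(x : G ⧸ N), zb⁆ ∈ L.map (QuotientGroup.mk' N) := hgen ▸ hb
      have hc := hcomm za hza _ hbL
      have hexp : ⁅(x : G ⧸ N), za * zb⁆ = ⁅(x : G ⧸ N), za⁆ * (za * ⁅(x : G ⧸ N), zb⁆ * za⁻¹) := by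
        group
      rw [hexp, hc.eq, mul_inv_cancel_right]
    | inv a ha iha =>
      obtain ⟨z, hz, rfl⟩ := iha
      refine ⟨z⁻¹, inv_mem hz, ?_⟩
      have haL : ⁅(x : G ⧸ N), z⁆ ∈ L.map (QuotientGroup.mk' N) := hgen ▸ ha
      have hc := (hcomm z hz _ haL).inv_right
      have hexp : ⁅(x : G ⧸ N), z⁻¹⁆ = z⁻¹ * ⁅(x : G ⧸ N), z⁆⁻¹ * z := by group
      rw [hexp, mul_assoc, ← hc.eq, inv_mul_cancel_left]
  have main : ∀ y ∈ L, ∃ z : G, z ∈ Subgroup.closure S ⊔ N ∧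
      (y : G ⧸ N) = ⁅(x : G ⧸ N), (z : G ⧸ N)⁆ := by
    intro y hy
    obtain ⟨z, hz, hyz⟩ := key (y : G ⧸ N) ⟨y, hy, rfl⟩
    rw [← MonoidHom.map_closure (QuotientGroup.mk' N)] at hz
    obtain ⟨z₀, hz₀, rfl⟩ := hz
    exact ⟨z₀, le_sup_left (a := Subgroup.closure S) hz₀, hyz⟩
  exact ⟨main, fun y hy => by obtain ⟨z, _, hz⟩ := main y hy; exact ⟨z, hz⟩⟩
end

section
/- Let L and N be normal subgroups of a group G and n a natural number. Then [L^n, N] ≤ [L,N]^n [L,N,L], where L^n is the subgroup generated by n-th powers of L. -/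
instance subPow_normal {G : Type*} [Group G] (H : Subgroup G) [H.Normal] (n : ℕ) :
    (subPow H n).Normal := by
  constructor
  intro x hx g
  induction hx using Subgroup.closure_induction with
  | mem y hy =>
    obtain ⟨l, hl, rfl⟩ := hy
    have : g * l ^ n * g⁻¹ = (g * l * g⁻¹) ^ n := by
      simp [mul_pow, conj_pow]
    rw [this]
    exact Subgroup.subset_closure ⟨g * l * g⁻¹, ‹H.Normal›.conj_mem l hl g, rfl⟩
  | one => simpa using (subPow H n).one_mem
  | mul a b _ _ ha hb =>
    have : g * (a * b) * g⁻¹ = (g * a * g⁻¹) * (g * b * g⁻¹) := by group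
    rw [this]; exact mul_mem ha hb
  | inv a _ ha =>
    have : g * a⁻¹ * g⁻¹ = (g * a * g⁻¹)⁻¹ := by group
    rw [this]; exact inv_mem ha

open scoped commutatorElement

theorem commutator_pow_aux {G : Type*} [Group G] {a b : G} (h : Commute ⁅a, b⁆ a) (n : ℕ) :
    ⁅a ^ n, b⁆ = ⁅a, b⁆ ^ n := by
  induction n with
  | zero => simp
  | succ n ih =>
    have key : ⁅a ^ (n + 1), b⁆ = a * ⁅a ^ n, b⁆ * a⁻¹ * ⁅a, b⁆ := by
      simp only [commutatorElement_def, pow_succ']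
      group
    rw [key, ih]
    have hc : Commute a (⁅a, b⁆ ^ n) := (h.symm.pow_right n)
    rw [hc.eq, mul_inv_cancel_right, ← pow_succ]

/-- For normal subgroups `L, N` of `G` and `n : ℕ`, one has
`[L^n, N] ≤ [L,N]^n [L,N,L]`. -/
theorem commutator_pow_le
    {G : Type*} [Group G] (L N : Subgroup G) [L.Normal] [N.Normal] (n : ℕ) :
    ⁅subPow L n, N⁆ ≤ subPow ⁅L, N⁆ n ⊔ ⁅⁅L, N⁆, L⁆ := by
  set M : Subgroup G := ⁅⁅L, N⁆, L⁆ with hM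
  set K : Subgroup G := subPow ⁅L, N⁆ n ⊔ M with hK
  haveI : M.Normal := Subgroup.commutator_normal _ _
  haveI : K.Normal := Subgroup.sup_normal _ _
  rw [Subgroup.commutator_le]
  intro g hg
  induction hg using Subgroup.closure_induction with
  | mem x hx =>
    obtain ⟨l, hl, rfl⟩ := hx
    intro h hh
    -- key computation via the quotient by M
    set π := QuotientGroup.mk' M with hπ
    have hcomm : Commute ⁅π l, π h⁆ (π l) := by
      have : ⁅⁅l, h⁆, l⁆ ∈ M :=
        Subgroup.commutator_mem_commutator (Subgroup.commutator_mem_commutator hl hh) hl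
      have h1 : π ⁅⁅l, h⁆, l⁆ = 1 := by
        rwa [← MonoidHom.mem_ker, QuotientGroup.ker_mk']
      rw [map_commutatorElement, map_commutatorElement] at h1
      exact commutatorElement_eq_one_iff_commute.mp h1
    have hdiff : ⁅l ^ n, h⁆ * (⁅l, h⁆ ^ n)⁻¹ ∈ M := by
      have h2 : π ⁅l ^ n, h⁆ = π (⁅l, h⁆ ^ n) := by
        rw [map_commutatorElement, map_pow, map_pow, map_commutatorElement]
        exact commutator_pow_aux hcomm n
      rw [← QuotientGroup.ker_mk' M, MonoidHom.mem_ker, map_mul, map_inv, h2]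
      exact mul_inv_cancel _
    have : ⁅l ^ n, h⁆ = (⁅l ^ n, h⁆ * (⁅l, h⁆ ^ n)⁻¹) * ⁅l, h⁆ ^ n := by group
    rw [this]
    refine mul_mem (Subgroup.mem_sup_right hdiff) (Subgroup.mem_sup_left ?_)
    exact Subgroup.subset_closure ⟨⁅l, h⁆, Subgroup.commutator_mem_commutator hl hh, rfl⟩
  | one => intro h hh; simp only [commutatorElement_one_left]; exact one_mem K
  | mul a b _ _ ha hb =>
    intro h hh
    have : ⁅a * b, h⁆ = a * ⁅b, h⁆ * a⁻¹ * ⁅a, h⁆ := by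
      simp only [commutatorElement_def]; group
    rw [this]
    exact mul_mem (‹K.Normal›.conj_mem _ (hb h hh) a) (ha h hh)
  | inv a _ ha =>
    intro h hh
    have : ⁅a⁻¹, h⁆ = a⁻¹ * ⁅a, h⁆⁻¹ * a := by
      simp only [commutatorElement_def]; group
    rw [this]
    have := ‹K.Normal›.conj_mem _ (inv_mem (ha h hh)) a⁻¹
    simpa using this
end

section
/- Let G be a finite p-group with G' cyclic. Then there exists x ∈ G such that every element of G' is of the form [x,g] for some g ∈ G. -/
open scoped commutatorElement

private def S (t : ℤ) : ℕ → ℤ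
  | 0 => 0
  | k+1 => 1 + t * S t k

private lemma S_zero (t : ℤ) : S t 0 = 0 := rfl

private lemma S_succ (t : ℤ) (k : ℕ) : S t (k+1) = 1 + t * S t k := rfl

private lemma S_succ' (t : ℤ) (k : ℕ) : S t (k+1) = S t k + t ^ k := by
  induction k with
  | zero => simp [S]
  | succ k ih =>
      have ih' : 1 + t * S t k = S t k + t ^ k := ih
      rw [S_succ t (k+1), ih]
      linear_combination ih'

private lemma dvd_pow_sub_one {p : ℕ} {t : ℤ} (ht : (p:ℤ) ∣ t - 1) (k : ℕ) :
    (p:ℤ) ∣ t ^ k - 1 := by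
  have := sub_dvd_pow_sub_pow t 1 k
  simp only [one_pow] at this
  exact ht.trans this

private lemma S_add (t : ℤ) (a b : ℕ) : S t (a+b) = S t a + t ^ a * S t b := by
  induction b with
  | zero => simp [S]
  | succ b ih => rw [← Nat.add_assoc, S_succ', ih, S_succ']; ring

private lemma S_mul (t : ℤ) (p k : ℕ) : S t (p*k) = S t p * S (t^p) k := by
  induction k with
  | zero => simp [S]
  | succ k ih =>
      rw [Nat.mul_succ, S_add, ih, S_succ', ← pow_mul]
      ring

private lemma S_mod_p {p : ℕ} {t : ℤ} (ht : (p:ℤ) ∣ t - 1) (k : ℕ) :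
    (p:ℤ) ∣ S t k - k := by
  induction k with
  | zero => simp [S]
  | succ k ih =>
      have : S t (k+1) - ((k:ℤ)+1) = (S t k - k) + (t ^ k - 1) := by
        rw [S_succ']; ring
      rw [Nat.cast_add, Nat.cast_one, this]
      exact dvd_add ih (dvd_pow_sub_one ht k)

private lemma S_p_eq {p : ℕ} (hp : p.Prime) {t : ℤ} (ht : (p:ℤ) ∣ t - 1)
    (ht4 : p = 2 → (4:ℤ) ∣ t - 1) : ∃ u : ℤ, S t p = p * (1 + p * u) := by
  rcases eq_or_ne p 2 with h2 | h2
  · subst h2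
    obtain ⟨s, hs⟩ := ht4 rfl
    refine ⟨s, ?_⟩
    have : t = 1 + 4*s := by linarith
    rw [show (2:ℕ) = 1 + 1 from rfl, S_succ', S_succ', S_zero, this]
    push_cast
    ring
  · obtain ⟨s, hs⟩ := ht
    have hodd : Odd p := hp.odd_of_ne_two h2
    have ht' : t = 1 + p * s := by linarith
    -- aux1 : t^k ≡ 1 + k p s  mod p²
    have aux1 : ∀ k : ℕ, (p:ℤ)^2 ∣ t^k - (1 + k*p*s) := by
      intro k
      induction k with
      | zero => simp
      | succ k ih =>
          have : t^(k+1) - (1 + (k+1:ℕ)*p*s)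
              = t * (t^k - (1 + k*p*s)) + (k:ℤ)*(p*s)^2 := by
            rw [ht']; push_cast; ring
          rw [this]
          exact dvd_add (Dvd.dvd.mul_left ih t) ⟨(k:ℤ)*s^2, by ring⟩
    have aux2 : ∀ k : ℕ, (p:ℤ)^2 ∣ 2 * S t k - (2*k + p*s*k*(k-1)) := by
      intro k
      induction k with
      | zero => simp [S_zero]
      | succ k ih =>
          have e : 2 * S t (k+1) - (2*(k+1:ℕ) + p*s*(k+1:ℕ)*((k+1:ℕ)-1))
              = (2 * S t k - (2*k + p*s*k*(k-1))) + 2*(t^k - (1 + k*p*s)) := by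
            rw [S_succ']; push_cast; ring
          rw [e]
          exact dvd_add ih (Dvd.dvd.mul_left (aux1 k) 2)
      -- using (k+1)-1 = k over ℤ after push_cast
    obtain ⟨a, ha⟩ := hodd
    have ha' : (p:ℤ) - 1 = 2 * a := by push_cast [ha]; ring
    have h1 := aux2 p
    have hX : (p:ℤ)^2 ∣ (S t p - p - p^2*s*a) * 2 := by
      have e : (S t p - (p:ℤ) - p^2*s*a) * 2
          = 2 * S t p - (2*p + p*s*p*((p:ℤ)-1)) := by
        linear_combination ((p:ℤ)^2*s) * ha'
      rw [e]; exact h1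
    have hpZ : Prime ((p:ℤ)) := Nat.prime_iff_prime_int.1 hp
    have hcop : IsCoprime ((p:ℤ)^2) 2 := by
      refine IsCoprime.pow_left ?_
      refine (Prime.coprime_iff_not_dvd hpZ).mpr ?_
      intro hd
      rw [show (2:ℤ) = ((2:ℕ):ℤ) by norm_num, Int.natCast_dvd_natCast] at hd
      exact h2 ((Nat.prime_dvd_prime_iff_eq hp Nat.prime_two).mp hd)
    obtain ⟨w, hw⟩ := hcop.dvd_of_dvd_mul_right hX
    exact ⟨s*a + w, by linear_combination hw⟩

private lemma S_dvd_iff {p : ℕ} (hp : p.Prime) :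
    ∀ (n : ℕ) (t : ℤ), (p:ℤ) ∣ t - 1 → (p = 2 → (4:ℤ) ∣ t - 1) →
    ∀ k : ℕ, ((p:ℤ)^n ∣ S t k ↔ (p:ℤ)^n ∣ (k:ℤ)) := by
  have hpZ : Prime ((p:ℤ)) := Nat.prime_iff_prime_int.1 hp
  have hp0 : (p:ℤ) ≠ 0 := by exact_mod_cast hp.ne_zero
  intro n
  induction n with
  | zero => intro t ht ht4 k; simp
  | succ n ih =>
      intro t ht ht4 k
      by_cases hk : p ∣ k
      · obtain ⟨k', rfl⟩ := hk
        obtain ⟨u, hu⟩ := S_p_eq hp ht ht4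
        have ht' : (p:ℤ) ∣ t^p - 1 := dvd_pow_sub_one ht p
        have ht4' : p = 2 → (4:ℤ) ∣ t^p - 1 := fun h => (ht4 h).trans
          (by simpa using sub_dvd_pow_sub_pow t 1 p)
        have hcop : IsCoprime ((p:ℤ)^n) (1 + p*u) := by
          refine IsCoprime.pow_left ((hpZ.coprime_iff_not_dvd).mpr ?_)
          intro hd
          exact hpZ.not_dvd_one (by simpa using dvd_sub hd ⟨u, rfl⟩)
        have e3 : (((p*k' : ℕ):ℤ)) = (p:ℤ) * k' := by push_cast; ring
        have e1 : ((p:ℤ)^(n+1) ∣ (p:ℤ) * (1 + (p:ℤ)*u) * S (t^p) k')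
            ↔ ((p:ℤ)^n ∣ (1+(p:ℤ)*u) * S (t^p) k') := by
          rw [pow_succ', mul_assoc, mul_dvd_mul_iff_left hp0]
        have e2 : ((p:ℤ)^n ∣ (1+(p:ℤ)*u) * S (t^p) k') ↔ ((p:ℤ)^n ∣ S (t^p) k') :=
          ⟨fun h => hcop.dvd_of_dvd_mul_left h, fun h => h.mul_left _⟩
        have e4 : ((p:ℤ)^(n+1) ∣ (p:ℤ)*(k':ℤ)) ↔ ((p:ℤ)^n ∣ (k':ℤ)) := by
          rw [pow_succ', mul_dvd_mul_iff_left hp0]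
        rw [S_mul, hu, e3, e1, e2, e4]
        exact ih (t^p) ht' ht4' k'
      · have h1 : ¬ ((p:ℤ)^(n+1) ∣ S t k) := by
          intro h
          have hps : (p:ℤ) ∣ S t k := (dvd_pow_self (p:ℤ) (Nat.succ_ne_zero n)).trans h
          have h2 : (p:ℤ) ∣ (k:ℤ) := by simpa using dvd_sub hps (S_mod_p ht k)
          exact hk (by exact_mod_cast h2)
        have h2 : ¬ ((p:ℤ)^(n+1) ∣ (k:ℤ)) := by
          intro h
          exact hk (by exact_mod_cast (dvd_pow_self (p:ℤ) (Nat.succ_ne_zero n)).trans h)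
        exact iff_of_false h1 h2

private lemma S_surj {p : ℕ} (hp : p.Prime) (n : ℕ) (t : ℤ) (ht : (p:ℤ) ∣ t - 1)
    (ht4 : p = 2 → (4:ℤ) ∣ t - 1) (r : ℤ) : ∃ k : ℕ, (p:ℤ)^n ∣ S t k - r := by
  have hpZ : Prime ((p:ℤ)) := Nat.prime_iff_prime_int.1 hp
  set m := p^n with hm
  haveI : NeZero m := ⟨pow_ne_zero n hp.ne_zero⟩
  have hmZ : ((m:ℕ):ℤ) = (p:ℤ)^n := by push_cast [hm]; ring
  have hcopt : IsCoprime ((p:ℤ)^n) t := by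
    refine IsCoprime.pow_left ((hpZ.coprime_iff_not_dvd).mpr ?_)
    intro hd
    exact hpZ.not_dvd_one (by simpa using dvd_sub hd ht)
  have key : ∀ a b : ℕ, a ≤ b → b < m → ((p:ℤ)^n ∣ S t b - S t a) → a = b := by
    intro a b hab hbm h
    obtain ⟨d, rfl⟩ := Nat.exists_eq_add_of_le hab
    have e : S t (a + d) - S t a = t ^ a * S t d := by rw [S_add]; ring
    rw [e] at h
    have h2 : (p:ℤ)^n ∣ S t d := (hcopt.pow_right).dvd_of_dvd_mul_left h
    have h3 : (p:ℤ)^n ∣ (d:ℤ) := (S_dvd_iff hp n t ht ht4 d).mp h2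
    have h4 : (m:ℕ) ∣ d := Int.natCast_dvd_natCast.mp (by rwa [← hmZ] at h3)
    have hd0 : d = 0 := Nat.eq_zero_of_dvd_of_lt h4 (by omega)
    omega
  have finj : Function.Injective (fun a : ZMod m => ((S t a.val : ℤ) : ZMod m)) := by
    intro a b hab
    simp only at hab
    have h0 : ((S t b.val - S t a.val : ℤ) : ZMod m) = 0 := by
      push_cast
      rw [sub_eq_zero]
      exact hab.symm
    have hd : ((m:ℕ):ℤ) ∣ S t b.val - S t a.val :=
      (ZMod.intCast_zmod_eq_zero_iff_dvd _ m).mp h0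
    rw [hmZ] at hd
    rcases le_total a.val b.val with hle | hle
    · exact ZMod.val_injective m (key a.val b.val hle (ZMod.val_lt b) hd)
    · exact (ZMod.val_injective m (key b.val a.val hle (ZMod.val_lt a) (by
        have : S t a.val - S t b.val = -(S t b.val - S t a.val) := by ring
        rw [this]; exact hd.neg_right))).symm
  have fsurj := Finite.injective_iff_surjective.mp finj
  obtain ⟨a, ha⟩ := fsurj ((r : ZMod m))
  refine ⟨a.val, ?_⟩
  rw [← hmZ, ← ZMod.intCast_zmod_eq_zero_iff_dvd]
  push_cast
  rw [sub_eq_zero]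
  exact_mod_cast ha

private lemma master {G : Type*} [Group G] {p n : ℕ} (hp : p.Prime)
    (x g D : G) (hD : D = ⁅x, g⁆)
    (hgen : ∀ y ∈ commutator G, ∃ j : ℤ, y = D ^ j)
    (hord : orderOf D ∣ p ^ n)
    (t : ℤ) (hconj : g * D * g⁻¹ = D ^ t)
    (ht : (p:ℤ) ∣ t - 1) (ht4 : p = 2 → (4:ℤ) ∣ t - 1) :
    (commutator G : Set G) = {y | ∃ h : G, y = ⁅x, h⁆} := by
  have commkey : ∀ k : ℕ, ⁅x, g^k⁆ = D ^ (S t k) := by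
    intro k
    induction k with
    | zero => simp [S_zero]
    | succ k ih =>
        have step : ⁅x, g^(k+1)⁆ = ⁅x,g⁆ * (g * ⁅x, g^k⁆ * g⁻¹) := by
          simp only [commutatorElement_def, pow_succ]
          group
        rw [step, ih, ← conj_zpow, hconj, ← zpow_mul, ← hD, S_succ,
          show D * D ^ (t * S t k) = D ^ ((1 : ℤ) + t * S t k) by
            rw [zpow_add, zpow_one]]
  ext y
  constructor
  · intro hy
    obtain ⟨j, rfl⟩ := hgen y hy
    obtain ⟨k, hk⟩ := S_surj hp n t ht ht4 j
    refine ⟨g ^ k, ?_⟩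
    rw [commkey k]
    have : (orderOf D : ℤ) ∣ S t k - j := by
      refine Dvd.dvd.trans ?_ hk
      exact_mod_cast hord
    have h1 : D ^ (S t k - j) = 1 := orderOf_dvd_iff_zpow_eq_one.mp this
    have : D ^ (S t k) = D ^ j * D ^ (S t k - j) := by
      rw [← zpow_add]; ring_nf
    rw [this, h1, mul_one]
  · rintro ⟨h, rfl⟩
    exact Subgroup.commutator_mem_commutator (Subgroup.mem_top x) (Subgroup.mem_top h)


private lemma conj_pow_eq {G : Type*} [Group G] {u D : G} {t : ℤ}
    (hconj : u * D * u⁻¹ = D ^ t) : ∀ m : ℕ, u^m * D * (u^m)⁻¹ = D ^ (t^m) := by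
  intro m
  induction m with
  | zero => simp
  | succ m ih =>
      have e : u^(m+1) * D * (u^(m+1))⁻¹ = u * (u^m * D * (u^m)⁻¹) * u⁻¹ := by
        rw [pow_succ']
        group
      rw [e, ih, ← conj_zpow, hconj, ← zpow_mul, pow_succ, mul_comm (t^m) t]

private lemma zmod_pow_pow (p : ℕ) [Fact p.Prime] (e : ℕ) (x : ZMod p) : x ^ (p^e) = x := by
  induction e with
  | zero => simp
  | succ e ih => rw [pow_succ, pow_mul, ih, ZMod.pow_card]

private lemma twist_mod_p {p : ℕ} (hp : p.Prime) {G : Type*} [Group G]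
    {u D : G} {t : ℤ} (hconj : u * D * u⁻¹ = D ^ t)
    {e : ℕ} (hu : u ^ (p^e) = 1) (hpord : p ∣ orderOf D) :
    (p:ℤ) ∣ t - 1 := by
  haveI : Fact p.Prime := ⟨hp⟩
  have h1 : D = D ^ (t ^ (p^e)) := by
    rw [← conj_pow_eq hconj (p^e), hu]; group
  have h2 : D ^ (t ^ (p^e) - 1) = 1 := by
    rw [zpow_sub, ← h1, zpow_one, mul_inv_cancel]
  have h3 : (orderOf D : ℤ) ∣ t ^ (p^e) - 1 := orderOf_dvd_iff_zpow_eq_one.mpr h2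
  have h4 : (p:ℤ) ∣ t ^ (p^e) - 1 := (Int.natCast_dvd_natCast.mpr hpord).trans h3
  have h5 : ((t : ZMod p)) ^ (p^e) = 1 := by
    have := (ZMod.intCast_zmod_eq_zero_iff_dvd _ p).mpr h4
    push_cast at this
    linear_combination this
  rw [zmod_pow_pow] at h5
  have : ((t - 1 : ℤ) : ZMod p) = 0 := by push_cast [h5]; ring
  exact (ZMod.intCast_zmod_eq_zero_iff_dvd _ p).mp this

private lemma twist_not_dvd {p n : ℕ} (hp : p.Prime) (hn : 1 ≤ n) {G : Type*} [Group G]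
    {u D : G} {t : ℤ} (hconj : u * D * u⁻¹ = D ^ t) (hordD : orderOf D = p^n) :
    ¬ (p:ℤ) ∣ t := by
  obtain ⟨m, rfl⟩ : ∃ m, n = m + 1 := ⟨n - 1, by omega⟩
  rintro ⟨w, rfl⟩
  have hordc : orderOf (u * D * u⁻¹) = orderOf D := by
    have h := orderOf_injective (MulAut.conj u).toMonoidHom (MulEquiv.injective _) D
    simpa [MulAut.conj_apply] using h
  have hDpn : D ^ (((p^(m+1) : ℕ)):ℤ) = 1 := by
    apply orderOf_dvd_iff_zpow_eq_one.mp
    rw [hordD]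
  have h1 : (u*D*u⁻¹) ^ (p^m) = 1 := by
    rw [hconj, ← zpow_natCast (D ^ ((p:ℤ)*w)), ← zpow_mul]
    have e : ((p:ℤ)*w) * ((p^m:ℕ):ℤ) = ((p^(m+1) : ℕ):ℤ) * w := by
      push_cast
      ring
    rw [e, zpow_mul, hDpn, one_zpow]
  have h2 : orderOf (u*D*u⁻¹) ∣ p^m := orderOf_dvd_iff_pow_eq_one.mpr h1
  rw [hordc, hordD] at h2
  have := (Nat.pow_dvd_pow_iff_le_right hp.one_lt).mp h2
  omega


/-- If `G` is a finite `p`-group with cyclic derived subgroup, then every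
element of `G'` is a commutator `⁅x, g⁆` for a single suitable `x ∈ G`. -/
theorem derived_subgroup_eq_commutators_of_cyclic
    {p : ℕ} [Fact p.Prime] {G : Type*} [Group G] [Finite G]
    (hG : IsPGroup p G) (hcyc : IsCyclic (commutator G)) :
    ∃ x : G, (commutator G : Set G) = {y | ∃ g : G, y = ⁅x, g⁆} := by
  have hp : p.Prime := Fact.out
  have hpZ : Prime ((p:ℤ)) := Nat.prime_iff_prime_int.1 hp
  obtain ⟨n, hcard⟩ := IsPGroup.iff_card.mp (hG.to_subgroup (commutator G))
  rcases Nat.eq_zero_or_pos n with hn0 | hn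
  · refine ⟨1, ?_⟩
    have hbot : commutator G = ⊥ := Subgroup.card_eq_one.mp (by rw [hcard, hn0, pow_zero])
    rw [hbot]
    ext y
    simp [eq_comm]
  · obtain ⟨c, hc⟩ := hcyc.exists_generator
    have hordc : orderOf c = p^n := by
      rw [orderOf_eq_card_of_forall_mem_zpowers hc, hcard]
    have hordc' : orderOf ((c:G)) = p^n := by
      rw [← hordc]
      exact orderOf_injective (commutator G).subtype (Subgroup.subtype_injective _) c
    have hex : ∃ a b : G, orderOf ⁅a,b⁆ = p^n := by
      by_contra hno
      push_neg at hno
      have hQ : commutator G ≤ Subgroup.zpowers ((c:G) ^ p) := by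
        refine (commutator_eq_closure G).trans_le ((Subgroup.closure_le _).mpr ?_)
        rintro z ⟨a, b, rfl⟩
        have hzN : ⁅a,b⁆ ∈ commutator G :=
          Subgroup.commutator_mem_commutator (Subgroup.mem_top a) (Subgroup.mem_top b)
        obtain ⟨j, hj⟩ := Subgroup.mem_zpowers_iff.mp (hc ⟨⁅a,b⁆, hzN⟩)
        have hj' : (c:G) ^ j = ⁅a,b⁆ := by
          have h := congrArg ((commutator G).subtype) hj
          simpa [SubgroupClass.coe_zpow] using h
        set r : ℕ := (j % ((orderOf ((c:G)) : ℤ))).toNat with hr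
        have hordpos : (0:ℤ) < ((orderOf ((c:G))):ℤ) := by
          rw [hordc']; exact_mod_cast pow_pos hp.pos n
        have hrj : (c:G) ^ r = (c:G) ^ j := by
          rw [← zpow_natCast, hr, Int.toNat_of_nonneg (Int.emod_nonneg j (by omega))]
          exact zpow_mod_orderOf (c:G) j
        by_cases hpr : p ∣ r
        · obtain ⟨s, hs⟩ := hpr
          exact Subgroup.mem_zpowers_iff.mpr
            ⟨(s:ℤ), by rw [zpow_natCast, ← pow_mul, ← hs, hrj, hj']⟩
        · exfalso
          have hor : orderOf ((c:G)^r) = p^n := by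
            rw [orderOf_pow, hordc']
            have hco : (p^n).gcd r = 1 :=
              Nat.Coprime.pow_left n ((Nat.Prime.coprime_iff_not_dvd hp).mpr hpr)
            rw [hco, Nat.div_one]
          exact hno a b (by rw [← hj', ← hrj]; exact hor)
      have hcQ : (c:G) ∈ Subgroup.zpowers ((c:G)^p) := hQ (SetLike.coe_mem c)
      obtain ⟨w, hw⟩ := Subgroup.mem_zpowers_iff.mp hcQ
      have hw' : (c:G) ^ ((p:ℤ) * w) = (c:G) := by
        rw [zpow_mul, zpow_natCast]
        exact hw
      have h1 : (c:G) ^ ((p:ℤ)*w - 1) = 1 := by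
        rw [zpow_sub, hw', zpow_one, mul_inv_cancel]
      have h2 : ((p:ℤ)) ∣ (p:ℤ)*w - 1 := by
        have h3 : ((orderOf ((c:G))):ℤ) ∣ (p:ℤ)*w - 1 := orderOf_dvd_iff_zpow_eq_one.mpr h1
        rw [hordc'] at h3
        refine dvd_trans ?_ h3
        push_cast
        exact dvd_pow_self _ (by omega)
      exact hpZ.not_dvd_one (by simpa using dvd_sub ⟨w, rfl⟩ h2)
    obtain ⟨a, b, hab⟩ := hex
    set D₀ := ⁅a, b⁆ with hD₀def
    have hD₀N : D₀ ∈ commutator G :=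
      Subgroup.commutator_mem_commutator (Subgroup.mem_top a) (Subgroup.mem_top b)
    have hgen : ∀ y ∈ commutator G, ∃ j : ℤ, y = D₀ ^ j := by
      have hco : orderOf ((⟨D₀, hD₀N⟩ : ↥(commutator G))) = p^n := by
        rw [← hab]
        have h := orderOf_injective (commutator G).subtype
          (Subgroup.subtype_injective _) ⟨D₀, hD₀N⟩
        set_option linter.unnecessarySimpa false in
        simpa using h
      have htop : Subgroup.zpowers (⟨D₀, hD₀N⟩ : ↥(commutator G)) = ⊤ :=
        Subgroup.eq_top_of_card_eq _ (by rw [Nat.card_zpowers, hco, hcard])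
      intro y hy
      have hmem : (⟨y, hy⟩ : ↥(commutator G)) ∈ Subgroup.zpowers ⟨D₀, hD₀N⟩ := by
        rw [htop]; exact Subgroup.mem_top _
      obtain ⟨j, hj⟩ := Subgroup.mem_zpowers_iff.mp hmem
      refine ⟨j, ?_⟩
      have h := congrArg ((commutator G).subtype) hj
      simpa [SubgroupClass.coe_zpow, eq_comm] using h
    have twist : ∀ u : G, ∃ t : ℤ, u * D₀ * u⁻¹ = D₀ ^ t := fun u =>
      hgen _ ((Subgroup.commutator_normal ⊤ ⊤).conj_mem D₀ hD₀N u)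
    obtain ⟨ta, hta⟩ := twist a
    obtain ⟨tb, htb⟩ := twist b
    have hpdvd : p ∣ orderOf D₀ := by rw [hab]; exact dvd_pow_self p (by omega)
    obtain ⟨ea, hea⟩ := hG a
    obtain ⟨eb, heb⟩ := hG b
    have hta1 : (p:ℤ) ∣ ta - 1 := twist_mod_p hp hta hea hpdvd
    have htb1 : (p:ℤ) ∣ tb - 1 := twist_mod_p hp htb heb hpdvd
    have horddvd : orderOf D₀ ∣ p^n := by rw [hab]
    by_cases hp2 : p = 2
    · subst hp2
      by_cases h4b : (4:ℤ) ∣ tb - 1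
      · exact ⟨a, master (n := n) hp a b D₀ hD₀def hgen horddvd tb htb htb1 (fun _ => h4b)⟩
      by_cases h4a : (4:ℤ) ∣ ta - 1
      · refine ⟨b, master (n := n) hp b a D₀⁻¹ ?_ ?_ ?_ ta ?_ hta1 (fun _ => h4a)⟩
        · rw [hD₀def]; exact commutatorElement_inv a b
        · intro y hy
          obtain ⟨j, hj⟩ := hgen y hy
          exact ⟨-j, by rw [zpow_neg, inv_zpow, inv_inv]; exact hj⟩
        · rw [orderOf_inv]; exact horddvd
        · have e : a * D₀⁻¹ * a⁻¹ = (a * D₀ * a⁻¹)⁻¹ := by group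
          rw [e, hta, ← inv_zpow]
      · have h2a : ¬ (2:ℤ) ∣ ta := by exact_mod_cast twist_not_dvd hp hn hta hab
        have h2b : ¬ (2:ℤ) ∣ tb := by exact_mod_cast twist_not_dvd hp hn htb hab
        have h4a' : ¬ (4:ℤ) ∣ ta - 1 := h4a
        have h3a : (4:ℤ) ∣ ta - 3 := by omega
        have h3b : (4:ℤ) ∣ tb - 3 := by omega
        have h4ab : (4:ℤ) ∣ ta*tb - 1 := by
          have e : ta*tb - 1 = (ta - 3)*tb + 3*(tb - 3) + 8 := by ring
          rw [e]
          exact dvd_add (dvd_add (h3a.mul_right _) (h3b.mul_left _)) (by norm_num)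
        have h2ab : ((2:ℕ):ℤ) ∣ ta*tb - 1 := by
          exact_mod_cast dvd_trans (by norm_num : (2:ℤ) ∣ 4) h4ab
        have hcop : IsCoprime (((2:ℕ):ℤ)^n) ta :=
          IsCoprime.pow_left ((hpZ.coprime_iff_not_dvd).mpr (by exact_mod_cast h2a))
        obtain ⟨α, β, hαβ⟩ := hcop
        have hD₀pn : D₀ ^ (((2^n : ℕ)):ℤ) = 1 := by
          apply orderOf_dvd_iff_zpow_eq_one.mp
          rw [hab]
        refine ⟨a, master (n := n) hp a (a*b) (D₀ ^ ta) ?_ ?_ ?_ (ta*tb) ?_ h2ab (fun _ => h4ab)⟩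
        · have e : ⁅a, a*b⁆ = a * ⁅a,b⁆ * a⁻¹ := by group
          rw [e, ← hD₀def, hta]
        · intro y hy
          obtain ⟨j, hj⟩ := hgen y hy
          refine ⟨β * j, ?_⟩
          rw [hj, ← zpow_mul]
          have e1 : D₀ ^ (ta * (β * j)) = D₀ ^ (ta * (β * j) - j) * D₀ ^ j := by
            rw [← zpow_add]; ring_nf
          rw [e1]
          have e2 : D₀ ^ (ta * (β * j) - j) = 1 := by
            apply orderOf_dvd_iff_zpow_eq_one.mp
            rw [hab]
            have e3 : ta * (β * j) - j = ((2^n : ℕ):ℤ) * (-α * j) := by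
              push_cast
              push_cast at hαβ
              linear_combination j * hαβ
            rw [e3]
            exact Dvd.intro _ rfl
          rw [e2, one_mul]
        · apply orderOf_dvd_iff_pow_eq_one.mpr
          rw [← zpow_natCast (D₀ ^ ta), ← zpow_mul, mul_comm, zpow_mul, hD₀pn, one_zpow]
        · have hconj_a : ∀ s : ℤ, a * D₀ ^ s * a⁻¹ = D₀ ^ (ta * s) := by
            intro s; rw [← conj_zpow, hta, ← zpow_mul]
          have hconj_b : ∀ s : ℤ, b * D₀ ^ s * b⁻¹ = D₀ ^ (tb * s) := by
            intro s; rw [← conj_zpow, htb, ← zpow_mul]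
          have e : (a*b) * (D₀ ^ ta) * (a*b)⁻¹ = a * (b * (D₀ ^ ta) * b⁻¹) * a⁻¹ := by
            group
          rw [e, hconj_b, hconj_a, ← zpow_mul]
          ring_nf
    · exact ⟨a, master (n := n) hp a b D₀ hD₀def hgen horddvd tb htb htb1 (fun h => absurd h hp2)⟩
end

section
/- Let G be a finite p-group with G' powerful, and C = C_G(G'/(G')^p). Then [G, C^{p^j}] ≤ (G')^{p^j} for every j ≥ 0. -/
open scoped commutatorElement

section SubPowBasic

variable {G : Type*} [Group G]

theorem mem_subPow {H : Subgroup G} {x : G} (hx : x ∈ H) (n : ℕ) :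
    x ^ n ∈ subPow H n :=
  Subgroup.subset_closure ⟨x, hx, rfl⟩

theorem subPow_le {H K : Subgroup G} {n : ℕ}
    (h : ∀ x ∈ H, x ^ n ∈ K) : subPow H n ≤ K := by
  refine (Subgroup.closure_le _).mpr ?_
  rintro _ ⟨x, hx, rfl⟩
  exact h x hx

theorem subPow_le_self (H : Subgroup G) (n : ℕ) : subPow H n ≤ H :=
  subPow_le fun _ hx => pow_mem hx n

theorem subPow_mono {H K : Subgroup G} (h : H ≤ K) (n : ℕ) : subPow H n ≤ subPow K n :=
  subPow_le fun x hx => mem_subPow (h hx) n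

theorem subPow_one (H : Subgroup G) : subPow H 1 = H := by
  refine le_antisymm (subPow_le fun x hx => by simpa using hx) (fun x hx => ?_)
  simpa using mem_subPow hx 1

theorem subPow_map {G' : Type*} [Group G'] (f : G →* G') (H : Subgroup G) (n : ℕ) :
    (subPow H n).map f = subPow (H.map f) n := by
  unfold subPow
  rw [MonoidHom.map_closure]
  congr 1
  ext y
  constructor
  · rintro ⟨_, ⟨x, hx, rfl⟩, rfl⟩
    exact ⟨f x, ⟨x, hx, rfl⟩, (map_pow f x n).symm⟩
  · rintro ⟨_, ⟨x, hx, rfl⟩, rfl⟩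
    exact ⟨x ^ n, ⟨x, hx, rfl⟩, map_pow f x n⟩

theorem subPow_mul_le (H : Subgroup G) (m n : ℕ) :
    subPow H (m * n) ≤ subPow (subPow H m) n :=
  subPow_le fun x hx => by
    rw [pow_mul]
    exact mem_subPow (mem_subPow hx m) n

theorem subPow_four_le_two (H : Subgroup G) : subPow H 4 ≤ subPow H 2 :=
  le_trans (by exact_mod_cast subPow_mul_le H 2 2) (subPow_le_self _ 2)

theorem Subgroup.Normal.map_conj_eq' {H : Subgroup G} (hH : H.Normal) (g : G) :
    H.map (MulAut.conj g).toMonoidHom = H := by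
  ext y
  constructor
  · rintro ⟨h, hh, rfl⟩
    simpa using hH.conj_mem h hh g
  · intro hy
    refine ⟨g⁻¹ * y * g, by simpa using hH.conj_mem y hy g⁻¹, ?_⟩
    simp [mul_assoc]

theorem subPow_normal_s11 {H : Subgroup G} (hH : H.Normal) (n : ℕ) : (subPow H n).Normal := by
  constructor
  intro x hx g
  have h1 : (subPow H n).map (MulAut.conj g).toMonoidHom = subPow H n := by
    rw [subPow_map, hH.map_conj_eq']
  have h2 : (MulAut.conj g).toMonoidHom x ∈ (subPow H n).map (MulAut.conj g).toMonoidHom :=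
    Subgroup.mem_map_of_mem _ hx
  rw [h1] at h2
  simpa using h2

end SubPowBasic

section CommIdent

variable {G : Type*} [Group G]

theorem comm_mul_left (a b g : G) : ⁅a * b, g⁆ = a * ⁅b, g⁆ * a⁻¹ * ⁅a, g⁆ := by
  simp only [commutatorElement_def]
  group

theorem conj_eq_comm_mul (x a : G) : x * a * x⁻¹ = ⁅x, a⁆ * a := by
  simp only [commutatorElement_def]
  group

/-- Expansion of `⁅x^n, g⁆` when `⁅x, ⁅x,g⁆⁆` is central. -/
theorem comm_pow_expand (x g : G) (hc : ∀ z : G, Commute ⁅x, ⁅x, g⁆⁆ z) (n : ℕ) :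
    ⁅x ^ n, g⁆ = ⁅x, ⁅x, g⁆⁆ ^ n.choose 2 * ⁅x, g⁆ ^ n := by
  set A := ⁅x, g⁆ with hA
  set c := ⁅x, A⁆ with hcdef
  induction n with
  | zero => simp [commutatorElement_def]
  | succ n ih =>
    have h1 : x ^ (n + 1) = x * x ^ n := by rw [pow_succ']
    rw [h1, comm_mul_left, ih]
    have hφc : x * c * x⁻¹ = c := by
      rw [mul_inv_eq_iff_eq_mul]
      exact (hc x).eq.symm
    have hφA : x * A * x⁻¹ = c * A := conj_eq_comm_mul x A
    have hconj : x * (c ^ n.choose 2 * A ^ n) * x⁻¹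
        = c ^ n.choose 2 * (c * A) ^ n := by
      have e1 : x * (c ^ n.choose 2 * A ^ n) * x⁻¹
          = (x * c ^ n.choose 2 * x⁻¹) * (x * A ^ n * x⁻¹) := by group
      have e2 : x * c ^ n.choose 2 * x⁻¹ = (x * c * x⁻¹) ^ n.choose 2 := by
        rw [conj_pow]
      have e3 : x * A ^ n * x⁻¹ = (x * A * x⁻¹) ^ n := by rw [conj_pow]
      rw [e1, e2, e3, hφc, hφA]
    rw [hconj, (hc A).mul_pow]
    have hch : (n + 1).choose 2 = n.choose 2 + n := by
      rw [Nat.choose_succ_succ, Nat.choose_one_right, Nat.add_comm]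
    rw [hch, pow_add, pow_succ]
    have h2 : c ^ n.choose 2 * (c ^ n * A ^ n) * A = c ^ n.choose 2 * c ^ n * (A ^ n * A) := by
      group
    rw [h2]

/-- `(x*y)^n = x^n * y^n * ⁅y,x⁆^(n choose 2)` when `⁅y,x⁆` is central. -/
theorem mul_pow_expand (x y : G) (hc : ∀ z : G, Commute ⁅y, x⁆ z) (n : ℕ) :
    (x * y) ^ n = x ^ n * y ^ n * ⁅y, x⁆ ^ n.choose 2 := by
  set z := ⁅y, x⁆ with hz
  have hyx : y * x = z * (x * y) := by
    rw [hz]; simp only [commutatorElement_def]; group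
  have key : ∀ k : ℕ, y ^ k * x = z ^ k * (x * y ^ k) := by
    intro k
    induction k with
    | zero => simp
    | succ k ih =>
      have : y ^ (k + 1) * x = y * (y ^ k * x) := by rw [pow_succ']; group
      rw [this, ih]
      have h1 : y * (z ^ k * (x * y ^ k)) = z ^ k * (y * x * y ^ k) := by
        have hm : y * z ^ k = z ^ k * y := ((hc y).pow_left k).eq.symm
        calc y * (z ^ k * (x * y ^ k)) = y * z ^ k * (x * y ^ k) := by group
          _ = z ^ k * y * (x * y ^ k) := by rw [hm]
          _ = z ^ k * (y * x * y ^ k) := by group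
      rw [h1, hyx]
      have h2 : z ^ k * (z * (x * y) * y ^ k) = z ^ (k + 1) * (x * y ^ (k + 1)) := by
        rw [pow_succ, pow_succ']
        group
      rw [h2]
  induction n with
  | zero => simp
  | succ n ih =>
    rw [pow_succ, ih]
    have h1 : x ^ n * y ^ n * z ^ n.choose 2 * (x * y)
        = x ^ n * (y ^ n * x) * (z ^ n.choose 2 * y) := by
      have hm : z ^ n.choose 2 * x = x * z ^ n.choose 2 := ((hc x).pow_left (n.choose 2)).eq
      calc x ^ n * y ^ n * z ^ n.choose 2 * (x * y)
          = x ^ n * y ^ n * (z ^ n.choose 2 * x) * y := by group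
        _ = x ^ n * y ^ n * (x * z ^ n.choose 2) * y := by rw [hm]
        _ = x ^ n * (y ^ n * x) * (z ^ n.choose 2 * y) := by group
    rw [h1, key n]
    have h2 : x ^ n * (z ^ n * (x * y ^ n)) * (z ^ n.choose 2 * y)
        = z ^ n * z ^ n.choose 2 * (x ^ (n + 1) * y ^ (n + 1)) := by
      have hm1 : x ^ n * z ^ n = z ^ n * x ^ n := ((hc (x ^ n)).pow_left n).eq.symm
      have hm2 : (x ^ n * x) * z ^ n.choose 2 = z ^ n.choose 2 * (x ^ n * x) :=
        ((hc (x ^ n * x)).pow_left (n.choose 2)).eq.symm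
      have hm3 : y ^ n * z ^ n.choose 2 = z ^ n.choose 2 * y ^ n :=
        ((hc (y ^ n)).pow_left (n.choose 2)).eq.symm
      calc x ^ n * (z ^ n * (x * y ^ n)) * (z ^ n.choose 2 * y)
          = x ^ n * z ^ n * (x * y ^ n) * (z ^ n.choose 2 * y) := by group
        _ = z ^ n * x ^ n * (x * y ^ n) * (z ^ n.choose 2 * y) := by rw [hm1]
        _ = z ^ n * (x ^ n * x * (y ^ n * z ^ n.choose 2) * y) := by group
        _ = z ^ n * (x ^ n * x * (z ^ n.choose 2 * y ^ n) * y) := by rw [hm3]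
        _ = z ^ n * ((x ^ n * x) * z ^ n.choose 2 * (y ^ n * y)) := by group
        _ = z ^ n * (z ^ n.choose 2 * (x ^ n * x) * (y ^ n * y)) := by rw [hm2]
        _ = z ^ n * z ^ n.choose 2 * (x ^ (n + 1) * y ^ (n + 1)) := by
            rw [pow_succ x, pow_succ y]; group
    rw [h2]
    have hch : (n + 1).choose 2 = n.choose 2 + n := by
      rw [Nat.choose_succ_succ, Nat.choose_one_right, Nat.add_comm]
    have hm4 : z ^ ((n + 1).choose 2) * (x ^ (n + 1) * y ^ (n + 1))
        = x ^ (n + 1) * y ^ (n + 1) * z ^ ((n + 1).choose 2) :=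
      ((hc (x ^ (n + 1) * y ^ (n + 1))).pow_left _).eq
    calc z ^ n * z ^ n.choose 2 * (x ^ (n + 1) * y ^ (n + 1))
        = z ^ ((n + 1).choose 2) * (x ^ (n + 1) * y ^ (n + 1)) := by
          rw [← pow_add, hch, Nat.add_comm]
      _ = x ^ (n + 1) * y ^ (n + 1) * z ^ ((n + 1).choose 2) := hm4

end CommIdent
section PGroupLemmas

universe u

theorem le_commutator_eq_bot {G : Type*} [Group G] [Finite G] {p : ℕ} [Fact p.Prime]
    (hG : IsPGroup p G) {X : Subgroup G} (h : X ≤ ⁅X, ⊤⁆) : X = ⊥ := by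
  have hnil : Group.IsNilpotent G := hG.isNilpotent
  obtain ⟨n, hn⟩ := nilpotent_iff_lowerCentralSeries.mp hnil
  have key : ∀ m, X ≤ Subgroup.lowerCentralSeries (⊤ : Subgroup G) m := by
    intro m
    induction m with
    | zero => exact le_top
    | succ m ih =>
      rw [lowerCentralSeries_succ]
      exact le_trans h (Subgroup.commutator_mono ih le_rfl)
  have := key n
  rw [hn] at this
  exact le_bot_iff.mp this

theorem pgroup_subPow_top_eq (p : ℕ) [Fact p.Prime] :
    ∀ (n : ℕ) (K : Type u) [Group K] [Finite K], Nat.card K ≤ n → IsPGroup p K →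
      subPow (⊤ : Subgroup K) p = ⊤ → ∀ x : K, x = 1 := by
  intro n
  induction n with
  | zero =>
    intro K _ _ hcard
    have := Nat.card_pos (α := K)
    omega
  | succ n IH =>
    intro K _ _ hcard hK hsub x
    rcases subsingleton_or_nontrivial K with hs | hnt
    · exact Subsingleton.elim x 1
    by_cases hZ : Subgroup.center K = ⊤
    · letI : CommGroup K := Group.commGroupOfCenterEqTop hZ
      set φ : K →* K := powMonoidHom p with hφ
      have hr : φ.range = ⊤ := by
        rw [eq_top_iff, ← hsub]
        exact subPow_le fun y _ => ⟨y, rfl⟩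
      have hsurj : Function.Surjective φ := MonoidHom.range_eq_top.mp hr
      have hinj : Function.Injective φ := Finite.injective_iff_surjective.mpr hsurj
      obtain ⟨m, hm⟩ := IsPGroup.iff_card.mp hK
      have hm1 : m ≠ 0 := by
        rintro rfl
        rw [pow_zero] at hm
        have : Subsingleton K := (Nat.card_eq_one_iff_unique.mp hm).1
        exact absurd this (not_subsingleton K)
      have hdvd : p ∣ Nat.card K := hm ▸ dvd_pow_self p hm1
      obtain ⟨g, hg⟩ := exists_prime_orderOf_dvd_card' p hdvd
      have he : φ g = φ 1 := by
        show g ^ p = (1 : K) ^ p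
        rw [one_pow, ← hg]
        exact pow_orderOf_eq_one g
      have hg1 : g = 1 := hinj he
      rw [hg1, orderOf_one] at hg
      exact absurd hg.symm (Fact.out : p.Prime).ne_one
    · set Z := Subgroup.center K with hZdef
      have hZnt : Nontrivial Z := hK.center_nontrivial
      have hcardZ : 1 < Nat.card Z := Finite.one_lt_card
      have h1 : Nat.card K = Nat.card (K ⧸ Z) * Nat.card Z :=
        Subgroup.card_eq_card_quotient_mul_card_subgroup Z
      have hposq := Nat.card_pos (α := K ⧸ Z)
      have hq : Nat.card (K ⧸ Z) ≤ n := by nlinarith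
      have hKQ : IsPGroup p (K ⧸ Z) := hK.to_quotient Z
      have hsubQ : subPow (⊤ : Subgroup (K ⧸ Z)) p = ⊤ := by
        have h2 := congrArg (Subgroup.map (QuotientGroup.mk' Z)) hsub
        rw [subPow_map, Subgroup.map_top_of_surjective _ (QuotientGroup.mk'_surjective Z)] at h2
        exact h2
      have hall := IH (K ⧸ Z) hq hKQ hsubQ
      have hZtop : Z = ⊤ := by
        rw [eq_top_iff]
        intro y _
        exact (QuotientGroup.eq_one_iff y).mp (hall ((QuotientGroup.mk' Z) y))
      exact absurd hZtop hZ

theorem subgroup_le_subPow_eq_bot {G : Type*} [Group G] [Finite G] {p : ℕ} [Fact p.Prime]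
    (hG : IsPGroup p G) {X : Subgroup G} (h : X ≤ subPow X p) : X = ⊥ := by
  have heq : subPow X p = X := le_antisymm (subPow_le_self X p) h
  have hmap : Subgroup.map X.subtype (subPow (⊤ : Subgroup X) p) = Subgroup.map X.subtype ⊤ := by
    rw [subPow_map, ← MonoidHom.range_eq_map, X.range_subtype, heq]
  have h2 : subPow (⊤ : Subgroup X) p = ⊤ :=
    Subgroup.map_injective X.subtype_injective hmap
  have hall := pgroup_subPow_top_eq p (Nat.card X) X le_rfl (hG.to_subgroup X) h2
  rw [eq_bot_iff]
  intro x hx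
  have h3 : (⟨x, hx⟩ : X) = 1 := hall ⟨x, hx⟩
  have : x = 1 := by simpa using congrArg X.subtype h3
  simpa [Subgroup.mem_bot] using this

theorem le_of_map_mk_le {G : Type*} [Group G] {V : Subgroup G} [V.Normal] {X Y : Subgroup G}
    (hV : V ≤ Y)
    (h : X.map (QuotientGroup.mk' V) ≤ Y.map (QuotientGroup.mk' V)) : X ≤ Y := by
  have h2 := Subgroup.map_le_map_iff.mp h
  rw [QuotientGroup.ker_mk'] at h2
  rwa [sup_eq_left.mpr hV] at h2

theorem normal_of_commutator_le {G : Type*} [Group G] {N : Subgroup G}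
    (h : ⁅N, (⊤ : Subgroup G)⁆ ≤ N) : N.Normal := by
  constructor
  intro n hn g
  have h1 : ⁅g, n⁆ ∈ N := by
    have := Subgroup.commutator_mem_commutator hn (Subgroup.mem_top g)
    have h2 : ⁅g, n⁆ = ⁅n, g⁆⁻¹ := by rw [commutatorElement_inv]
    rw [h2]
    exact inv_mem (h this)
  have h3 : g * n * g⁻¹ = ⁅g, n⁆ * n := by
    simp only [commutatorElement_def]
    group
  rw [h3]
  exact mul_mem h1 hn

end PGroupLemmas
section PeStep

universe u

theorem pe_step_aux (p : ℕ) [Fact p.Prime] :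
    ∀ (n : ℕ) (G : Type u) [Group G] [Finite G], Nat.card G ≤ n → IsPGroup p G →
      ∀ N : Subgroup G, ⁅N, (⊤ : Subgroup G)⁆ ≤ subPow N (if p = 2 then 4 else p) →
      ⁅subPow N p, (⊤ : Subgroup G)⁆ ≤ subPow (subPow N p) (if p = 2 then 4 else p) := by
  intro n
  induction n with
  | zero =>
    intro G _ _ hcard
    have := Nat.card_pos (α := G)
    omega
  | succ n IH =>
    intro G _ _ hcard hG N hpe
    set q : ℕ := if p = 2 then 4 else p with hq
    have hqle : subPow N q ≤ subPow N p := by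
      by_cases h2 : p = 2
      · rw [hq, if_pos h2, h2]
        exact subPow_four_le_two N
      · rw [hq, if_neg h2]
    have hNn : N.Normal := normal_of_commutator_le (le_trans hpe (subPow_le_self N q))
    have hPn : (subPow N p).Normal := subPow_normal_s11 hNn p
    set P := subPow N p with hP
    set Y := subPow P q with hY
    have hYn : Y.Normal := subPow_normal_s11 hPn q
    set X := ⁅P, (⊤ : Subgroup G)⁆ with hX
    have hXn : X.Normal := by
      haveI := hPn
      exact Subgroup.commutator_normal P ⊤
    -- quotient reduction helper
    have key : ∀ V : Subgroup G, V.Normal → V ≠ ⊥ →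
        X ≤ Y ⊔ V := by
      intro V hVn hVbot
      haveI := hVn
      have hcardV : Nat.card (G ⧸ V) ≤ n := by
        have h1 : Nat.card G = Nat.card (G ⧸ V) * Nat.card V :=
          Subgroup.card_eq_card_quotient_mul_card_subgroup V
        have h2 : 1 < Nat.card V := by
          have hpos := Nat.card_pos (α := V)
          have hne : Nat.card V ≠ 1 := fun hc => hVbot (V.eq_bot_of_card_eq hc)
          omega
        have h3 := Nat.card_pos (α := G ⧸ V)
        nlinarith
      have hGV : IsPGroup p (G ⧸ V) := hG.to_quotient V
      set f := QuotientGroup.mk' V with hf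
      have hftop : (⊤ : Subgroup G).map f = ⊤ :=
        Subgroup.map_top_of_surjective f (QuotientGroup.mk'_surjective V)
      have hpeV : ⁅N.map f, (⊤ : Subgroup (G ⧸ V))⁆ ≤ subPow (N.map f) q := by
        calc ⁅N.map f, (⊤ : Subgroup (G ⧸ V))⁆ = ⁅N.map f, (⊤ : Subgroup G).map f⁆ := by
              rw [hftop]
          _ = Subgroup.map f ⁅N, (⊤ : Subgroup G)⁆ := (Subgroup.map_commutator N ⊤ f).symm
          _ ≤ Subgroup.map f (subPow N q) := Subgroup.map_mono hpe
          _ = subPow (N.map f) q := subPow_map f N q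
      have hres := IH (G ⧸ V) hcardV hGV (N.map f) hpeV
      have e1 : subPow (N.map f) p = P.map f := (subPow_map f N p).symm
      rw [e1] at hres
      have e2 : subPow (P.map f) q = Y.map f := (subPow_map f P q).symm
      rw [e2] at hres
      have e3 : ⁅P.map f, (⊤ : Subgroup (G ⧸ V))⁆ = X.map f := by
        rw [← hftop]
        exact (Subgroup.map_commutator P ⊤ f).symm
      rw [e3] at hres
      have h4 := Subgroup.map_le_map_iff.mp hres
      rwa [hf, QuotientGroup.ker_mk'] at h4
    by_cases hYbot : Y = ⊥
    swap
    · have h2 := key Y hYn hYbot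
      rwa [sup_idem] at h2
    suffices hXbot : X = ⊥ by
      rw [hXbot]
      exact bot_le
    by_cases hXX : ⁅X, (⊤ : Subgroup G)⁆ = ⊥
    swap
    · have hXXn : (⁅X, (⊤ : Subgroup G)⁆).Normal := by
        haveI := hXn
        exact Subgroup.commutator_normal X ⊤
      have h2 := key ⁅X, ⊤⁆ hXXn hXX
      rw [hYbot, bot_sup_eq] at h2
      exact le_commutator_eq_bot hG h2
    have hXc : ∀ x ∈ X, ∀ z : G, Commute x z := by
      intro x hx z
      have h1 : ⁅x, z⁆ ∈ ⁅X, (⊤ : Subgroup G)⁆ :=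
        Subgroup.commutator_mem_commutator hx (Subgroup.mem_top z)
      rw [hXX, Subgroup.mem_bot] at h1
      exact commutatorElement_eq_one_iff_commute.mp h1
    by_cases hXp : subPow X p = ⊥
    swap
    · have h2 := key (subPow X p) (subPow_normal_s11 hXn p) hXp
      rw [hYbot, bot_sup_eq] at h2
      exact subgroup_le_subPow_eq_bot hG h2
    -- core case
    have hYelt : ∀ u ∈ P, u ^ q = 1 := by
      intro u hu
      have h1 := mem_subPow hu q
      rw [← hY, hYbot, Subgroup.mem_bot] at h1
      exact h1
    have hXelt : ∀ x ∈ X, x ^ p = 1 := by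
      intro x hx
      have h1 := mem_subPow hx p
      rw [hXp, Subgroup.mem_bot] at h1
      exact h1
    rw [hX, eq_bot_iff]
    refine (Subgroup.commutator_le).mpr ?_
    intro y hy g _
    rw [Subgroup.mem_bot]
    suffices hsub : P ≤ Subgroup.centralizer {g} by
      have h1 := hsub hy
      rw [Subgroup.mem_centralizer_iff] at h1
      have h2 : Commute y g := (h1 g (Set.mem_singleton g)).symm
      exact commutatorElement_eq_one_iff_commute.mpr h2
    apply subPow_le
    intro x hxN
    rw [Subgroup.mem_centralizer_iff]
    intro h hh
    rw [Set.mem_singleton_iff] at hh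
    subst hh
    suffices hcomm : ⁅x ^ p, h⁆ = 1 by
      exact (commutatorElement_eq_one_iff_commute.mp hcomm).symm.eq
    set A := ⁅x, h⁆ with hAd
    have hAq : A ∈ subPow N q := hpe (Subgroup.commutator_mem_commutator hxN (Subgroup.mem_top h))
    have hAP : A ∈ P := hqle hAq
    have hcA : ⁅x, A⁆ ∈ X := by
      have h1 : ⁅A, x⁆ ∈ X := Subgroup.commutator_mem_commutator hAP (Subgroup.mem_top x)
      have h2 := inv_mem h1
      rwa [commutatorElement_inv] at h2
    have hcen : ∀ z : G, Commute ⁅x, A⁆ z := fun z => hXc _ hcA z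
    have hexp := comm_pow_expand x h hcen p
    by_cases hp2 : p = 2
    · subst hp2
      have hq4 : q = 4 := by rw [hq]; norm_num
      -- squares of elements of P centralize P
      have hS1 : ∀ u ∈ P, ∀ v ∈ P, ⁅u ^ 2, v⁆ = 1 := by
        intro u hu v hv
        have huv : ⁅u, v⁆ ∈ X := Subgroup.commutator_mem_commutator hu (Subgroup.mem_top v)
        have h1 : ⁅u, ⁅u, v⁆⁆ = 1 :=
          commutatorElement_eq_one_iff_commute.mpr ((hXc _ huv u).symm)
        have hexp2 := comm_pow_expand u v (by rw [h1]; exact fun z => Commute.one_left z) 2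
        rw [h1, one_pow, one_mul] at hexp2
        rw [hexp2]
        exact hXelt _ huv
      have hS2 : subPow P 2 ≤ Subgroup.centralizer (P : Set G) := by
        apply subPow_le
        intro u hu
        rw [Subgroup.mem_centralizer_iff]
        intro v hv
        exact ((commutatorElement_eq_one_iff_commute.mp (hS1 u hu v hv)).symm).eq
      have hS3 : ∀ a ∈ subPow P 2, a ^ 2 = 1 := by
        intro a ha
        have ha' : a ∈ Subgroup.closure ((· ^ 2) '' (P : Set G)) := ha
        refine Subgroup.closure_induction
          (p := fun b _ => b ^ 2 = 1) ?_ ?_ ?_ ?_ ha'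
        · rintro _ ⟨u, hu, rfl⟩
          show (u ^ 2) ^ 2 = 1
          rw [← pow_mul]
          exact hYelt u hu
        · show (1 : G) ^ 2 = 1
          rw [one_pow]
        · intro b c hb hc hb2 hc2
          show (b * c) ^ 2 = 1
          have hbc : Commute b c := by
            have hbS : b ∈ subPow P 2 := hb
            have hcS : c ∈ subPow P 2 := hc
            have h1 := hS2 hbS
            rw [Subgroup.mem_centralizer_iff] at h1
            exact (h1 c (subPow_le_self P 2 hcS)).symm
          rw [hbc.mul_pow, hb2, hc2, one_mul]
        · intro b _ hb2
          show b⁻¹ ^ 2 = 1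
          rw [inv_pow, hb2, inv_one]
      have hN4le : subPow N 4 ≤ subPow P 2 := by
        have h22 : (4 : ℕ) = 2 * 2 := rfl
        rw [h22]
        exact subPow_mul_le N 2 2
      have hS4 : ∀ b : G, ∀ a ∈ subPow N 4, ⁅a, b⁆ = 1 := by
        intro b
        have hsub4 : subPow N 4 ≤ Subgroup.centralizer {b} := by
          apply subPow_le
          intro u huN
          rw [Subgroup.mem_centralizer_iff]
          intro w hw
          rw [Set.mem_singleton_iff] at hw
          rw [hw]
          have he : ⁅u, b⁆ ∈ subPow N 4 := by
            rw [← hq4]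
            exact hpe (Subgroup.commutator_mem_commutator huN (Subgroup.mem_top b))
          have heP2 : ⁅u, b⁆ ∈ subPow P 2 := hN4le he
          have he2 : ⁅u, b⁆ ^ 2 = 1 := hS3 _ heP2
          have hcX : ⁅u, ⁅u, b⁆⁆ ∈ X := by
            have hP' : ⁅u, b⁆ ∈ P := subPow_le_self P 2 heP2
            have h1 : ⁅⁅u, b⁆, u⁆ ∈ X :=
              Subgroup.commutator_mem_commutator hP' (Subgroup.mem_top u)
            have h2 := inv_mem h1
            rwa [commutatorElement_inv] at h2
          have hcen4 : ∀ z : G, Commute ⁅u, ⁅u, b⁆⁆ z := fun z => hXc _ hcX z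
          have hexp4 := comm_pow_expand u b hcen4 4
          have hc6 : Nat.choose 4 2 = 6 := rfl
          have hX2 : ⁅u, ⁅u, b⁆⁆ ^ 2 = 1 := hXelt _ hcX
          have h6 : ⁅u, ⁅u, b⁆⁆ ^ 6 = 1 := by
            rw [show (6 : ℕ) = 2 * 3 from rfl, pow_mul, hX2, one_pow]
          have h4 : ⁅u, b⁆ ^ 4 = 1 := by
            rw [show (4 : ℕ) = 2 * 2 from rfl, pow_mul, he2, one_pow]
          have hres : ⁅u ^ 4, b⁆ = 1 := by rw [hexp4, hc6, h6, h4, one_mul]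
          exact ((commutatorElement_eq_one_iff_commute.mp hres).symm).eq
        intro a ha
        have h1 := hsub4 ha
        rw [Subgroup.mem_centralizer_iff] at h1
        have h2 := h1 b (Set.mem_singleton b)
        exact commutatorElement_eq_one_iff_commute.mpr h2.symm
      have hA4 : A ∈ subPow N 4 := by rw [← hq4]; exact hAq
      have hA2 : A ^ 2 = 1 := hS3 _ (hN4le hA4)
      have hxA : ⁅A, x⁆ = 1 := hS4 x A hA4
      have hxA' : ⁅x, A⁆ = 1 :=
        commutatorElement_eq_one_iff_commute.mpr
          (commutatorElement_eq_one_iff_commute.mp hxA).symm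
      rw [hexp, hxA', one_pow, one_mul]
      exact hA2
    · have hq' : q = p := by rw [hq, if_neg hp2]
      have hAp : A ^ p = 1 := by rw [← hq']; exact hYelt A hAP
      have hdvd : 2 ∣ p - 1 := by
        have hodd : Odd p := (Fact.out : p.Prime).odd_of_ne_two hp2
        obtain ⟨k, hk⟩ := hodd
        omega
      have hchoose : p.choose 2 = p * ((p - 1) / 2) := by
        rw [Nat.choose_two_right, Nat.mul_div_assoc p hdvd]
      have hXA : ⁅x, A⁆ ^ p = 1 := hXelt _ hcA
      rw [hexp, hAp, hchoose, pow_mul, hXA, one_pow, one_mul]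

end PeStep
section FrSur

open Pointwise

universe u

theorem pe_step (p : ℕ) [Fact p.Prime] {G : Type u} [Group G] [Finite G]
    (hG : IsPGroup p G) (N : Subgroup G)
    (hpe : ⁅N, (⊤ : Subgroup G)⁆ ≤ subPow N (if p = 2 then 4 else p)) :
    ⁅subPow N p, (⊤ : Subgroup G)⁆ ≤ subPow (subPow N p) (if p = 2 then 4 else p) :=
  pe_step_aux p (Nat.card G) G le_rfl hG N hpe

theorem fr_aux (p : ℕ) [Fact p.Prime] :
    ∀ (n : ℕ) (K : Type u) [Group K] [Finite K], Nat.card K ≤ n → IsPGroup p K →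
      ∀ x : K, Subgroup.zpowers x ⊔ subPow (⊤ : Subgroup K) p = ⊤ →
      ∀ y : K, y ∈ Subgroup.zpowers x := by
  intro n
  induction n with
  | zero =>
    intro K _ _ hcard
    have := Nat.card_pos (α := K)
    omega
  | succ n IH =>
    intro K _ _ hcard hK x hgen y
    rcases subsingleton_or_nontrivial K with hs | hnt
    · have : y = 1 := Subsingleton.elim y 1
      rw [this]
      exact one_mem _
    by_cases hZ : Subgroup.center K = ⊤
    · -- abelian case: Nakayama style
      have hcomm : ∀ a b : K, a * b = b * a := by
        intro a b
        exact (Subgroup.mem_center_iff.mp (hZ ▸ Subgroup.mem_top a) b).symm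
      haveI hzn : (Subgroup.zpowers x).Normal := by
        constructor
        intro m hm g
        have : g * m * g⁻¹ = m := by rw [hcomm g m]; group
        rw [this]
        exact hm
      set f := QuotientGroup.mk' (Subgroup.zpowers x) with hf
      have h1 := congrArg (Subgroup.map f) hgen
      rw [Subgroup.map_sup, subPow_map,
        Subgroup.map_top_of_surjective f (QuotientGroup.mk'_surjective _),
        MonoidHom.map_zpowers] at h1
      have hfx : f x = 1 := (QuotientGroup.eq_one_iff x).mpr (Subgroup.mem_zpowers x)
      rw [hfx, Subgroup.zpowers_one_eq_bot, bot_sup_eq] at h1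
      have hall := pgroup_subPow_top_eq p (Nat.card (K ⧸ Subgroup.zpowers x)) _
        le_rfl (hK.to_quotient _) h1
      exact (QuotientGroup.eq_one_iff y).mp (hall (f y))
    · -- quotient by the center
      set Z := Subgroup.center K with hZd
      have hZnt : Nontrivial Z := hK.center_nontrivial
      have hcardZ : 1 < Nat.card Z := Finite.one_lt_card
      have h1 : Nat.card K = Nat.card (K ⧸ Z) * Nat.card Z :=
        Subgroup.card_eq_card_quotient_mul_card_subgroup Z
      have hposq := Nat.card_pos (α := K ⧸ Z)
      have hq : Nat.card (K ⧸ Z) ≤ n := by nlinarith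
      set f := QuotientGroup.mk' Z with hf
      have h2 := congrArg (Subgroup.map f) hgen
      rw [Subgroup.map_sup, subPow_map,
        Subgroup.map_top_of_surjective f (QuotientGroup.mk'_surjective _),
        MonoidHom.map_zpowers] at h2
      have hcyc := IH (K ⧸ Z) hq (hK.to_quotient Z) (f x) h2
      -- every element is x^m * central
      have hdec : ∀ a : K, ∃ (m : ℤ) (w : K), w ∈ Z ∧ a = x ^ m * w := by
        intro a
        obtain ⟨m, hm⟩ := Subgroup.mem_zpowers_iff.mp (hcyc (f a))
        refine ⟨m, (x ^ m)⁻¹ * a, ?_, by group⟩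
        have : f ((x ^ m)⁻¹ * a) = 1 := by
          rw [map_mul, map_inv, map_zpow, hm]
          group
        exact (QuotientGroup.eq_one_iff _).mp this
      have habel : Subgroup.center K = ⊤ := by
        rw [eq_top_iff]
        intro a _
        rw [Subgroup.mem_center_iff]
        intro b
        obtain ⟨m, w, hw, rfl⟩ := hdec a
        obtain ⟨k, w', hw', rfl⟩ := hdec b
        have hcw : ∀ g : K, Commute g w := fun g => Subgroup.mem_center_iff.mp hw g
        have hcw' : ∀ g : K, Commute g w' := fun g => Subgroup.mem_center_iff.mp hw' g
        have c1 : Commute (x ^ m) (x ^ k) := (Commute.refl x).zpow_zpow m k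
        have hca : Commute (x ^ k * w') (x ^ m * w) := by
          have h3 : Commute (x ^ k) (x ^ m * w) := c1.symm.mul_right (hcw (x ^ k))
          have h4 : Commute w' (x ^ m * w) := (hcw' (x ^ m * w)).symm
          exact h3.mul_left h4
        exact hca.eq
      exact absurd habel hZ

theorem sur_aux (p : ℕ) [Fact p.Prime] :
    ∀ (n : ℕ) (K : Type u) [Group K] [Finite K], Nat.card K ≤ n → IsPGroup p K →
      ⁅(⊤ : Subgroup K), (⊤ : Subgroup K)⁆ ≤ subPow (⊤ : Subgroup K) (if p = 2 then 4 else p) →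
      ∀ y ∈ subPow (⊤ : Subgroup K) p, ∃ x : K, x ^ p = y := by
  intro n
  induction n with
  | zero =>
    intro K _ _ hcard
    have := Nat.card_pos (α := K)
    omega
  | succ n IH =>
    intro K _ _ hcard hK hpow y hy
    set q : ℕ := if p = 2 then 4 else p with hq
    set P := subPow (⊤ : Subgroup K) p with hPd
    set W := subPow P p with hWd
    have hTn : (⊤ : Subgroup K).Normal := inferInstance
    have hPn : P.Normal := subPow_normal_s11 hTn p
    have hWn : W.Normal := subPow_normal_s11 hPn p
    haveI := hPn; haveI := hWn
    have hPpe : ⁅P, (⊤ : Subgroup K)⁆ ≤ subPow P q := pe_step p hK ⊤ hpow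
    have hqW : subPow P q ≤ W := by
      by_cases h2 : p = 2
      · rw [hWd, hq, if_pos h2, h2]
        exact subPow_four_le_two P
      · rw [hWd, hq, if_neg h2]
    have hcom : ⁅P, (⊤ : Subgroup K)⁆ ≤ W := le_trans hPpe hqW
    set f := QuotientGroup.mk' W with hf
    have hcenQ : ∀ a ∈ P, ∀ z : K ⧸ W, Commute (f a) z := by
      intro a ha z
      obtain ⟨zz, rfl⟩ := QuotientGroup.mk'_surjective W z
      have h1 : ⁅a, zz⁆ ∈ W :=
        hcom (Subgroup.commutator_mem_commutator ha (Subgroup.mem_top zz))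
      have h2 : f ⁅a, zz⁆ = 1 := (QuotientGroup.eq_one_iff _).mpr h1
      rw [map_commutatorElement] at h2
      exact commutatorElement_eq_one_iff_commute.mp h2
    set S : Subgroup (K ⧸ W) :=
      { carrier := {z | (∀ w : K ⧸ W, Commute z w) ∧ z ^ p = 1}
        one_mem' := ⟨fun w => Commute.one_left w, one_pow p⟩
        mul_mem' := by
          rintro a b ⟨ha1, ha2⟩ ⟨hb1, hb2⟩
          refine ⟨fun w => (ha1 w).mul_left (hb1 w), ?_⟩
          show (a * b) ^ p = 1
          rw [(ha1 b).mul_pow, ha2, hb2, one_mul]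
        inv_mem' := by
          rintro a ⟨ha1, ha2⟩
          refine ⟨fun w => (ha1 w).inv_left, ?_⟩
          show a⁻¹ ^ p = 1
          rw [inv_pow, ha2, inv_one] } with hSd
    have hS : P ≤ Subgroup.comap f S := by
      rw [hPd]
      apply subPow_le
      intro z _
      refine ⟨fun w => hcenQ _ (mem_subPow (Subgroup.mem_top z) p) w, ?_⟩
      rw [← map_pow]
      refine (QuotientGroup.eq_one_iff _).mpr ?_
      exact mem_subPow (mem_subPow (Subgroup.mem_top z) p) p
    have hPS : ∀ a ∈ P, (∀ w : K ⧸ W, Commute (f a) w) ∧ (f a) ^ p = 1 :=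
      fun a ha => hS ha
    -- the set of p-th powers in the quotient is a subgroup
    have hRmul : ∀ u v : K ⧸ W, (∃ s, s ^ p = u) → (∃ t, t ^ p = v) →
        ∃ r, r ^ p = u * v := by
      rintro _ _ ⟨s, rfl⟩ ⟨t, rfl⟩
      obtain ⟨ss, rfl⟩ := QuotientGroup.mk'_surjective W s
      obtain ⟨tt, rfl⟩ := QuotientGroup.mk'_surjective W t
      have hzP : ⁅tt, ss⁆ ∈ subPow (⊤ : Subgroup K) q :=
        hpow (Subgroup.commutator_mem_commutator (Subgroup.mem_top tt) (Subgroup.mem_top ss))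
      by_cases h2 : p = 2
      · -- quotient is abelian
        have hzW : ⁅tt, ss⁆ ∈ W := by
          have h4 : subPow (⊤ : Subgroup K) q ≤ W := by
            rw [hWd, hPd, hq, if_pos h2, h2]
            have h22 : (4 : ℕ) = 2 * 2 := rfl
            rw [h22]
            exact subPow_mul_le ⊤ 2 2
          exact h4 hzP
        have hab : Commute (f ss) (f tt) := by
          have h5 : f ⁅tt, ss⁆ = 1 := (QuotientGroup.eq_one_iff _).mpr hzW
          rw [map_commutatorElement] at h5
          exact (commutatorElement_eq_one_iff_commute.mp h5).symm
        exact ⟨f ss * f tt, by show (f ss * f tt) ^ p = f ss ^ p * f tt ^ p; rw [hab.mul_pow]⟩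
      · have hqp : q = p := by rw [hq, if_neg h2]
        have hzPP : ⁅tt, ss⁆ ∈ P := by rw [hPd, ← hqp]; exact hzP
        obtain ⟨hc1, hc2⟩ := hPS _ hzPP
        have hz : ⁅f tt, f ss⁆ = f ⁅tt, ss⁆ := (map_commutatorElement _ _ _).symm
        have hexp := mul_pow_expand (f ss) (f tt)
          (by rw [hz]; exact hc1) p
        refine ⟨f ss * f tt, ?_⟩
        show (f ss * f tt) ^ p = f ss ^ p * f tt ^ p
        rw [hexp, hz]
        have hdvd : 2 ∣ p - 1 := by
          have hodd : Odd p := (Fact.out : p.Prime).odd_of_ne_two h2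
          obtain ⟨k, hk⟩ := hodd
          omega
        have hchoose : p.choose 2 = p * ((p - 1) / 2) := by
          rw [Nat.choose_two_right, Nat.mul_div_assoc p hdvd]
        rw [hchoose, pow_mul, hc2, one_pow, mul_one]
    set R : Subgroup (K ⧸ W) :=
      { carrier := Set.range (· ^ p : K ⧸ W → K ⧸ W)
        one_mem' := ⟨1, one_pow p⟩
        mul_mem' := by
          rintro a b ⟨s, rfl⟩ ⟨t, rfl⟩
          exact hRmul _ _ ⟨s, rfl⟩ ⟨t, rfl⟩
        inv_mem' := by
          rintro a ⟨s, rfl⟩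
          exact ⟨s⁻¹, by show s⁻¹ ^ p = (s ^ p)⁻¹; rw [inv_pow]⟩ } with hRd
    have hPR : P ≤ Subgroup.comap f R := by
      rw [hPd]
      apply subPow_le
      intro z _
      exact ⟨f z, (map_pow f z p).symm⟩
    obtain ⟨s, hs⟩ := hPR hy
    obtain ⟨x, rfl⟩ := QuotientGroup.mk'_surjective W s
    have hs' : f x ^ p = f y := hs
    have hwW : (x ^ p)⁻¹ * y ∈ W := by
      have h1 : f ((x ^ p)⁻¹ * y) = 1 := by
        rw [map_mul, map_inv, map_pow, hs']
        group
      exact (QuotientGroup.eq_one_iff _).mp h1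
    have hyxw : y = x ^ p * ((x ^ p)⁻¹ * y) := by group
    set H := Subgroup.zpowers x ⊔ P with hHd
    have hHpow : ⁅H, H⁆ ≤ subPow H q := by
      have hVn : (subPow P q).Normal := subPow_normal_s11 hPn q
      haveI := hVn
      have hle : ⁅H, H⁆ ≤ subPow P q := by
        rw [Subgroup.commutator_le]
        intro a ha b hb
        set g := QuotientGroup.mk' (subPow P q) with hg
        suffices hcm : Commute (g a) (g b) by
          have h3 : ⁅g a, g b⁆ = 1 := commutatorElement_eq_one_iff_commute.mpr hcm
          rw [← map_commutatorElement] at h3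
          exact (QuotientGroup.eq_one_iff _).mp h3
        have hcenV : ∀ u ∈ P, ∀ z : K ⧸ subPow P q, Commute (g u) z := by
          intro u hu z
          obtain ⟨zz, rfl⟩ := QuotientGroup.mk'_surjective _ z
          have h1 : ⁅u, zz⁆ ∈ subPow P q :=
            hPpe (Subgroup.commutator_mem_commutator hu (Subgroup.mem_top zz))
          have h2 : g ⁅u, zz⁆ = 1 := (QuotientGroup.eq_one_iff _).mpr h1
          rw [map_commutatorElement] at h2
          exact commutatorElement_eq_one_iff_commute.mp h2
        have hset : (H : Set K) = (Subgroup.zpowers x : Set K) * (P : Set K) :=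
          Subgroup.mul_normal (Subgroup.zpowers x) P
        have hdec : ∀ c : K, c ∈ H → ∃ u v : K, u ∈ Subgroup.zpowers x ∧ v ∈ P ∧ c = u * v := by
          intro c hc
          have : c ∈ (Subgroup.zpowers x : Set K) * (P : Set K) := by rw [← hset]; exact hc
          obtain ⟨u, hu, v, hv, huv⟩ := this
          exact ⟨u, v, hu, hv, huv.symm⟩
        obtain ⟨u, v, hu, hv, rfl⟩ := hdec a ha
        obtain ⟨u', v', hu', hv', rfl⟩ := hdec b hb
        rw [map_mul, map_mul]
        obtain ⟨m, rfl⟩ := Subgroup.mem_zpowers_iff.mp hu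
        obtain ⟨k, rfl⟩ := Subgroup.mem_zpowers_iff.mp hu'
        have c1 : Commute (g (x ^ m)) (g (x ^ k)) := by
          rw [map_zpow, map_zpow]
          exact (Commute.refl (g x)).zpow_zpow m k
        have h3 : Commute (g (x ^ m)) (g (x ^ k) * g v') :=
          c1.mul_right ((hcenV v' hv' (g (x ^ m))).symm)
        have h4 : Commute (g v) (g (x ^ k) * g v') := hcenV v hv _
        exact h3.mul_left h4
      exact le_trans hle (subPow_mono le_sup_right q)
    have hyH : y ∈ subPow H p := by
      rw [hyxw]
      have hxH : x ∈ H := by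
        rw [hHd]
        exact Subgroup.mem_sup_left (Subgroup.mem_zpowers x)
      refine mul_mem (mem_subPow hxH p) ?_
      have h5 : W ≤ subPow H p := by
        rw [hWd]
        exact subPow_mono le_sup_right p
      exact h5 hwW
    by_cases hHtop : H = ⊤
    · have hgen : Subgroup.zpowers x ⊔ subPow (⊤ : Subgroup K) p = ⊤ := by
        rw [← hPd, ← hHd]
        exact hHtop
      have hcyc := fr_aux p (Nat.card K) K le_rfl hK x hgen
      have hcomm : ∀ a b : K, Commute a b := by
        intro a b
        obtain ⟨m, hm⟩ := Subgroup.mem_zpowers_iff.mp (hcyc a)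
        obtain ⟨k, hk⟩ := Subgroup.mem_zpowers_iff.mp (hcyc b)
        rw [← hm, ← hk]
        exact (Commute.refl x).zpow_zpow m k
      set R2 : Subgroup K :=
        { carrier := Set.range (· ^ p : K → K)
          one_mem' := ⟨1, one_pow p⟩
          mul_mem' := by
            rintro a b ⟨s, rfl⟩ ⟨t, rfl⟩
            exact ⟨s * t, by show (s * t) ^ p = s ^ p * t ^ p; rw [(hcomm s t).mul_pow]⟩
          inv_mem' := by
            rintro a ⟨s, rfl⟩
            exact ⟨s⁻¹, by show s⁻¹ ^ p = (s ^ p)⁻¹; rw [inv_pow]⟩ } with hR2d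
      have hPR2 : P ≤ R2 := by
        rw [hPd]
        exact subPow_le fun z _ => ⟨z, rfl⟩
      exact hPR2 hy
    · have hcardH : Nat.card H ≤ n := by
        have h1 : Nat.card H * H.index = Nat.card K := Subgroup.card_mul_index H
        have h2 : H.index ≠ 1 := fun hc => hHtop (Subgroup.index_eq_one.mp hc)
        have h3 : H.index ≠ 0 := Subgroup.index_ne_zero_of_finite
        have h4 := Nat.card_pos (α := H)
        have h5 : 2 ≤ H.index := by omega
        nlinarith
      have hmt : Subgroup.map H.subtype ⊤ = H := by
        rw [← MonoidHom.range_eq_map, H.range_subtype]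
      have hpowH : ⁅(⊤ : Subgroup H), (⊤ : Subgroup H)⁆ ≤ subPow (⊤ : Subgroup H) q := by
        refine (Subgroup.map_le_map_iff_of_injective H.subtype_injective).mp ?_
        rw [Subgroup.map_commutator, hmt, subPow_map, hmt]
        exact hHpow
      have hKH : IsPGroup p H := hK.to_subgroup H
      have hyH' : y ∈ Subgroup.map H.subtype (subPow (⊤ : Subgroup H) p) := by
        rw [subPow_map, hmt]
        exact hyH
      obtain ⟨y', hy', hyy⟩ := hyH'
      obtain ⟨z, hz⟩ := IH H hcardH hKH hpowH y' hy'
      refine ⟨(z : K), ?_⟩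
      rw [← hyy, ← hz]
      simp

end FrSur
section MainAssembly

universe u

theorem subPow_ifq_le {G : Type*} [Group G] (p : ℕ) (X : Subgroup G) :
    subPow X (if p = 2 then 4 else p) ≤ subPow X p := by
  by_cases h2 : p = 2
  · rw [if_pos h2, h2]
    exact subPow_four_le_two X
  · rw [if_neg h2]

theorem sur_subgroup (p : ℕ) [Fact p.Prime] {G : Type u} [Group G] [Finite G]
    (hG : IsPGroup p G) (E : Subgroup G)
    (hpowE : ⁅E, E⁆ ≤ subPow E (if p = 2 then 4 else p)) :
    ∀ y ∈ subPow E p, ∃ z ∈ E, z ^ p = y := by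
  intro y hy
  have hmt : Subgroup.map E.subtype ⊤ = E := by
    rw [← MonoidHom.range_eq_map, E.range_subtype]
  have hpowH : ⁅(⊤ : Subgroup E), (⊤ : Subgroup E)⁆
      ≤ subPow (⊤ : Subgroup E) (if p = 2 then 4 else p) := by
    refine (Subgroup.map_le_map_iff_of_injective E.subtype_injective).mp ?_
    rw [Subgroup.map_commutator, hmt, subPow_map, hmt]
    exact hpowE
  have hyE : y ∈ Subgroup.map E.subtype (subPow (⊤ : Subgroup E) p) := by
    rw [subPow_map, hmt]
    exact hy
  obtain ⟨y', hy', hyy⟩ := hyE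
  obtain ⟨z, hz⟩ := sur_aux p (Nat.card E) E le_rfl (hG.to_subgroup E) hpowH y' hy'
  refine ⟨(z : G), z.2, ?_⟩
  rw [← hyy, ← hz]
  simp

end MainAssembly

open scoped commutatorElement

/-- If `G` is a finite `p`-group with `G'` powerful and `C = C_G(G'/(G')^p)`,
then `[G, C^(p^j)] ≤ (G')^(p^j)` for every `j ≥ 0`. -/
theorem commutator_top_centralizer_pow
    {p : ℕ} [Fact p.Prime] {G : Type*} [Group G] [Finite G]
    (hG : IsPGroup p G)
    (hpow : IsPowerfulSubgroup p (commutator G))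
    (C : Subgroup G)
    (hC : ∀ g : G, g ∈ C ↔ ∀ a ∈ commutator G, ⁅g, a⁆ ∈ subPow (commutator G) p)
    (j : ℕ) :
    ⁅(⊤ : Subgroup G), subPow C (p ^ j)⁆ ≤ subPow (commutator G) (p ^ j) := by
  set H := commutator G with hHdef
  have hpow' : ⁅H, H⁆ ≤ subPow H (if p = 2 then 4 else p) := by
    by_cases h2 : p = 2
    · rw [if_pos h2]
      simp only [IsPowerfulSubgroup, if_pos h2] at hpow
      exact hpow
    · rw [if_neg h2]
      simp only [IsPowerfulSubgroup, if_neg h2] at hpow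
      exact hpow
  have hHn : H.Normal := by rw [hHdef]; infer_instance
  set N : ℕ → Subgroup G := fun i => subPow H (p ^ i) with hNdef
  have hNn : ∀ i, (N i).Normal := fun i => subPow_normal_s11 hHn (p ^ i)
  have hNleH : ∀ i, N i ≤ H := fun i => subPow_le_self H (p ^ i)
  have hN0 : N 0 = H := by
    show subPow H (p ^ 0) = H
    rw [pow_zero, subPow_one]
  have hmtH : Subgroup.map H.subtype ⊤ = H := by
    rw [← MonoidHom.range_eq_map, H.range_subtype]
  have hGH : IsPGroup p H := hG.to_subgroup H
  -- main chain
  have chain : ∀ i : ℕ,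
      (∀ y ∈ N i, ∃ h ∈ H, h ^ (p ^ i) = y) ∧
      (subPow (N i) p = N (i + 1)) ∧
      (∃ D : Subgroup H, Subgroup.map H.subtype D = N i ∧
        ⁅D, (⊤ : Subgroup H)⁆ ≤ subPow D (if p = 2 then 4 else p)) := by
    intro i
    induction i with
    | zero =>
      refine ⟨?_, ?_, ⟨⊤, ?_, ?_⟩⟩
      · intro y hy
        rw [hN0] at hy
        exact ⟨y, hy, by rw [pow_zero, pow_one]⟩
      · rw [hN0]
        show subPow H p = subPow H (p ^ 1)
        rw [pow_one]
      · rw [hmtH, hN0]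
      · refine (Subgroup.map_le_map_iff_of_injective H.subtype_injective).mp ?_
        rw [Subgroup.map_commutator, hmtH, subPow_map, hmtH]
        exact hpow'
    | succ i ih =>
      obtain ⟨hsurj, hstep, D, hDmap, hDpe⟩ := ih
      have hpeNi : ⁅N i, H⁆ ≤ subPow (N i) (if p = 2 then 4 else p) := by
        have h1 := Subgroup.map_mono (f := H.subtype) hDpe
        rw [Subgroup.map_commutator, hDmap, hmtH, subPow_map, hDmap] at h1
        exact h1
      have hsurj1 : ∀ y ∈ N (i + 1), ∃ h ∈ H, h ^ (p ^ (i + 1)) = y := by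
        intro z hz
        have hz' : z ∈ subPow (N i) p := by rw [hstep]; exact hz
        have hpowE : ⁅N i, N i⁆ ≤ subPow (N i) (if p = 2 then 4 else p) :=
          le_trans (Subgroup.commutator_mono le_rfl (hNleH i)) hpeNi
        obtain ⟨w, hwNi, hwz⟩ := sur_subgroup p hG (N i) hpowE z hz'
        obtain ⟨h, hh, hhw⟩ := hsurj w hwNi
        refine ⟨h, hh, ?_⟩
        rw [pow_succ, pow_mul, hhw, hwz]
      have hstep1 : subPow (N (i + 1)) p = N (i + 2) := by
        apply le_antisymm
        · apply subPow_le
          intro z hz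
          obtain ⟨h, hh, rfl⟩ := hsurj1 z hz
          rw [← pow_mul, ← pow_succ]
          exact mem_subPow hh _
        · apply subPow_le
          intro x hx
          rw [pow_succ, pow_mul]
          exact mem_subPow (mem_subPow hx (p ^ (i + 1))) p
      refine ⟨hsurj1, hstep1, ⟨subPow D p, ?_, ?_⟩⟩
      · rw [subPow_map, hDmap, hstep]
      · exact pe_step p hGH D hDpe
  have hpeN : ∀ i, ⁅N i, H⁆ ≤ subPow (N i) (if p = 2 then 4 else p) := by
    intro i
    obtain ⟨D, hDmap, hDpe⟩ := (chain i).2.2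
    have h1 := Subgroup.map_mono (f := H.subtype) hDpe
    rw [Subgroup.map_commutator, hDmap, hmtH, subPow_map, hDmap] at h1
    exact h1
  have hP2 : ∀ i, ⁅N (i + 1), H⁆ ≤ N (i + 2) := by
    intro i
    refine le_trans (hpeN (i + 1)) ?_
    refine le_trans (subPow_ifq_le p (N (i + 1))) ?_
    rw [(chain (i + 1)).2.1]
  -- the commutator subgroup characterization of C
  have hC' : ∀ c ∈ C, ∀ a ∈ H, ⁅c, a⁆ ∈ N 1 := by
    intro c hc a ha
    have h1 := (hC c).mp hc a ha
    show ⁅c, a⁆ ∈ subPow H (p ^ 1)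
    rw [pow_one]
    exact h1
  -- F2 : [N i, C] ≤ N (i+1)
  have hF2 : ∀ i, ∀ z ∈ N i, ∀ c ∈ C, ⁅z, c⁆ ∈ N (i + 1) := by
    intro i
    induction i with
    | zero =>
      intro z hz c hc
      have h1 : ⁅c, z⁆ ∈ N 1 := hC' c hc z (by rw [← hN0]; exact hz)
      have h2 := inv_mem h1
      rwa [commutatorElement_inv] at h2
    | succ i ih =>
      intro z hz c hc
      obtain ⟨h, hh, hhz⟩ := (chain (i + 1)).1 z hz
      set w := h ^ (p ^ i) with hwdef
      have hwNi : w ∈ N i := mem_subPow hh (p ^ i)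
      have hzw : z = w ^ p := by
        rw [hwdef, ← pow_mul, ← pow_succ]
        exact hhz.symm
      haveI := hNn (i + 2)
      set φ := QuotientGroup.mk' (N (i + 2)) with hφd
      have hc1 : ⁅w, c⁆ ∈ N (i + 1) := ih w hwNi c hc
      have hcc : ⁅w, ⁅w, c⁆⁆ ∈ N (i + 2) := by
        have h3 : ⁅⁅w, c⁆, w⁆ ∈ ⁅N (i + 1), H⁆ :=
          Subgroup.commutator_mem_commutator hc1 (hNleH i hwNi)
        have h4 : ⁅⁅w, c⁆, w⁆ ∈ N (i + 2) := hP2 i h3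
        have h5 := inv_mem h4
        rwa [commutatorElement_inv] at h5
      have h8 : ⁅φ w, ⁅φ w, φ c⁆⁆ = 1 := by
        rw [← map_commutatorElement, ← map_commutatorElement]
        exact (QuotientGroup.eq_one_iff _).mpr hcc
      have hcen : ∀ z' : G ⧸ N (i + 2), Commute ⁅φ w, ⁅φ w, φ c⁆⁆ z' := by
        rw [h8]
        exact fun z' => Commute.one_left z'
      have hexp := comm_pow_expand (φ w) (φ c) hcen p
      have hwcp : ⁅w, c⁆ ^ p ∈ N (i + 2) := by
        obtain ⟨h', hh', hwc⟩ := (chain (i + 1)).1 ⁅w, c⁆ hc1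
        rw [← hwc, ← pow_mul, ← pow_succ]
        exact mem_subPow hh' _
      have hmain : φ ⁅z, c⁆ = 1 := by
        rw [hzw]
        have h6 : φ ⁅w ^ p, c⁆ = ⁅(φ w) ^ p, φ c⁆ := by
          rw [map_commutatorElement, map_pow]
        rw [h6, hexp]
        have h7 : ⁅φ w, φ c⁆ ^ p = 1 := by
          rw [← map_commutatorElement, ← map_pow]
          exact (QuotientGroup.eq_one_iff _).mpr hwcp
        rw [h7, h8, one_pow, one_mul]
      exact (QuotientGroup.eq_one_iff _).mp hmain
  -- A : ⁅g, c^(p^j)⁆ ∈ N j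
  have hA : ∀ (jj : ℕ), ∀ c ∈ C, ∀ g : G, ⁅g, c ^ (p ^ jj)⁆ ∈ N jj := by
    intro jj
    induction jj with
    | zero =>
      intro c hc g
      rw [pow_zero, pow_one, hN0, hHdef, commutator_def]
      exact Subgroup.commutator_mem_commutator (Subgroup.mem_top g) (Subgroup.mem_top c)
    | succ jj ih =>
      intro c hc g
      set z := c ^ (p ^ jj) with hzdef
      have hzC : z ∈ C := pow_mem hc _
      have hgz : ⁅z, g⁆ ∈ N jj := by
        have h1 := ih c hc g
        have h2 := inv_mem h1
        rwa [commutatorElement_inv] at h2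
      haveI := hNn (jj + 1)
      set φ := QuotientGroup.mk' (N (jj + 1)) with hφd
      have hcc : ⁅z, ⁅z, g⁆⁆ ∈ N (jj + 1) := by
        have h3 : ⁅⁅z, g⁆, z⁆ ∈ N (jj + 1) := hF2 jj ⁅z, g⁆ hgz z hzC
        have h4 := inv_mem h3
        rwa [commutatorElement_inv] at h4
      have h8 : ⁅φ z, ⁅φ z, φ g⁆⁆ = 1 := by
        rw [← map_commutatorElement, ← map_commutatorElement]
        exact (QuotientGroup.eq_one_iff _).mpr hcc
      have hcen : ∀ z' : G ⧸ N (jj + 1), Commute ⁅φ z, ⁅φ z, φ g⁆⁆ z' := by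
        rw [h8]
        exact fun z' => Commute.one_left z'
      have hexp := comm_pow_expand (φ z) (φ g) hcen p
      have hzgp : ⁅z, g⁆ ^ p ∈ N (jj + 1) := by
        obtain ⟨h', hh', hwc⟩ := (chain jj).1 ⁅z, g⁆ hgz
        rw [← hwc, ← pow_mul, ← pow_succ]
        exact mem_subPow hh' _
      have hmain : φ ⁅z ^ p, g⁆ = 1 := by
        have h6 : φ ⁅z ^ p, g⁆ = ⁅(φ z) ^ p, φ g⁆ := by
          rw [map_commutatorElement, map_pow]
        rw [h6, hexp]
        have h7 : ⁅φ z, φ g⁆ ^ p = 1 := by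
          rw [← map_commutatorElement, ← map_pow]
          exact (QuotientGroup.eq_one_iff _).mpr hzgp
        rw [h7, h8, one_pow, one_mul]
      have h9 : ⁅z ^ p, g⁆ ∈ N (jj + 1) := (QuotientGroup.eq_one_iff _).mp hmain
      have h10 : ⁅g, z ^ p⁆ ∈ N (jj + 1) := by
        have h11 := inv_mem h9
        rwa [commutatorElement_inv] at h11
      have h12 : c ^ (p ^ (jj + 1)) = z ^ p := by
        rw [hzdef, ← pow_mul, ← pow_succ]
      rwa [h12]
  -- conclusion
  show ⁅(⊤ : Subgroup G), subPow C (p ^ j)⁆ ≤ N j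
  rw [Subgroup.commutator_le]
  intro g1 _ g2 hg2
  haveI := hNn j
  set φ := QuotientGroup.mk' (N j) with hφd
  have hle : subPow C (p ^ j) ≤ Subgroup.comap φ (Subgroup.centralizer {φ g1}) := by
    apply subPow_le
    intro c hc
    show φ (c ^ (p ^ j)) ∈ Subgroup.centralizer {φ g1}
    rw [Subgroup.mem_centralizer_iff]
    intro h hh
    rw [Set.mem_singleton_iff] at hh
    rw [hh]
    have h1 : φ ⁅g1, c ^ (p ^ j)⁆ = 1 := (QuotientGroup.eq_one_iff _).mpr (hA j c hc g1)
    rw [map_commutatorElement] at h1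
    exact (commutatorElement_eq_one_iff_commute.mp h1).eq
  have h2 : φ g2 ∈ Subgroup.centralizer {φ g1} := hle hg2
  rw [Subgroup.mem_centralizer_iff] at h2
  have h3 := h2 (φ g1) (Set.mem_singleton _)
  have h4 : ⁅φ g1, φ g2⁆ = 1 := commutatorElement_eq_one_iff_commute.mpr h3
  rw [← map_commutatorElement] at h4
  exact (QuotientGroup.eq_one_iff _).mp h4
end
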